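/- (Equi-expressivity) Over any assignment structure 𝔄, the first-order modal μ-calculus and first-order game logic are equi-expressive: (1) 𝔄⟦φ⟧_GL = 𝔄⟦φ♯⟧_μ for every GL-formula φ (without propositional variables), and (2) 𝔄⟦ψ⟧_μ = 𝔄⟦ψ♭⟧_GL for every Lμ-formula ψ (without free propositional variables), where ψ♭ = ⟨ψ^η⟩⊤ and η is the dictionary with η(X) = 0 for all X. -/

import Mathlib

open FirstOrder Set

namespace GLMu

/-! ## Barred propositional variables -/

/-- Barred propositional variables: `Sum.inl X` is `X`, `Sum.inr X` is `X̄`. -/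
def bar {V : Type*} : V ⊕ V → V ⊕ V := Sum.elim Sum.inr Sum.inl

def unbar {V : Type*} : V ⊕ V → V := Sum.elim id id

/-! ## First-order literals -/

/-- First-order literals with equality: atomic formulas and their negations. -/
inductive Lit (L : Language) (𝒳 : Type*) where
  | eq (t₁ t₂ : L.Term 𝒳)
  | ne (t₁ t₂ : L.Term 𝒳)
  | rel {n : ℕ} (R : L.Relations n) (ts : Fin n → L.Term 𝒳)
  | nrel {n : ℕ} (R : L.Relations n) (ts : Fin n → L.Term 𝒳)

namespace Lit

variable {L : Language} {𝒳 : Type*}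

/-- Negation of a literal. -/
def neg : Lit L 𝒳 → Lit L 𝒳
  | .eq t₁ t₂ => .ne t₁ t₂
  | .ne t₁ t₂ => .eq t₁ t₂
  | .rel R ts => .nrel R ts
  | .nrel R ts => .rel R ts

variable {M : Type*} [L.Structure M]

/-- Semantics of a literal: the set of states in which it is true. -/
def sem : Lit L 𝒳 → Set (𝒳 → M)
  | .eq t₁ t₂ => {ω | t₁.realize ω = t₂.realize ω}
  | .ne t₁ t₂ => {ω | t₁.realize ω ≠ t₂.realize ω}
  | .rel R ts => {ω | Language.Structure.RelMap R (fun i => (ts i).realize ω)}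
  | .nrel R ts => {ω | ¬ Language.Structure.RelMap R (fun i => (ts i).realize ω)}

end Lit

/-- The set of object variables occurring in a term. -/
def tvars {L : Language} {𝒳 : Type*} : L.Term 𝒳 → Set 𝒳
  | .var x => {x}
  | .func _ ts => ⋃ i, tvars (ts i)

/-- The set of object variables occurring in a literal. -/
def Lit.ovars {L : Language} {𝒳 : Type*} : Lit L 𝒳 → Set 𝒳
  | .eq t₁ t₂ => tvars t₁ ∪ tvars t₂
  | .ne t₁ t₂ => tvars t₁ ∪ tvars t₂
  | .rel _ ts => ⋃ i, tvars (ts i)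
  | .nrel _ ts => ⋃ i, tvars (ts i)

/-! ## Syntax of the first-order modal μ-calculus -/

/-- Formulas of the first-order modal μ-calculus `Lμ_𝒱` (raw syntax). -/
inductive MuF (L : Language) (𝒳 Act V : Type*) where
  | lit (p : Lit L 𝒳)
  | var (X : V ⊕ V)
  | or (φ₁ φ₂ : MuF L 𝒳 Act V)
  | and (φ₁ φ₂ : MuF L 𝒳 Act V)
  | dia (a : Act) (φ : MuF L 𝒳 Act V)
  | box (a : Act) (φ : MuF L 𝒳 Act V)
  | mu (X : V ⊕ V) (φ : MuF L 𝒳 Act V)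
  | nu (X : V ⊕ V) (φ : MuF L 𝒳 Act V)

namespace MuF

variable {L : Language} {𝒳 Act V : Type*}

/-- The propositional variables (in `𝒱̄`) mentioned anywhere in a formula. -/
def mentions : MuF L 𝒳 Act V → Set (V ⊕ V)
  | .lit _ => ∅
  | .var X => {X}
  | .or φ ψ => φ.mentions ∪ ψ.mentions
  | .and φ ψ => φ.mentions ∪ ψ.mentions
  | .dia _ φ => φ.mentions
  | .box _ φ => φ.mentions
  | .mu X φ => {X} ∪ φ.mentions
  | .nu X φ => {X} ∪ φ.mentions

/-- Well-formedness: in `μX.ψ` and `νX.ψ` the body `ψ` may not mention `X̄`.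
This is the constraint built into the grammar of `Lμ_𝒱`. -/
def WF : MuF L 𝒳 Act V → Prop
  | .lit _ => True
  | .var _ => True
  | .or φ ψ => φ.WF ∧ ψ.WF
  | .and φ ψ => φ.WF ∧ ψ.WF
  | .dia _ φ => φ.WF
  | .box _ φ => φ.WF
  | .mu X φ => bar X ∉ φ.mentions ∧ φ.WF
  | .nu X φ => bar X ∉ φ.mentions ∧ φ.WF

/-- The free propositional variables of a formula. -/
def freeVars : MuF L 𝒳 Act V → Set (V ⊕ V)
  | .lit _ => ∅
  | .var X => {X}
  | .or φ ψ => φ.freeVars ∪ ψ.freeVars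
  | .and φ ψ => φ.freeVars ∪ ψ.freeVars
  | .dia _ φ => φ.freeVars
  | .box _ φ => φ.freeVars
  | .mu X φ => φ.freeVars \ {X, bar X}
  | .nu X φ => φ.freeVars \ {X, bar X}

/-- The propositional variables bound by a fixpoint operator somewhere in a formula. -/
def boundVars : MuF L 𝒳 Act V → Set (V ⊕ V)
  | .lit _ => ∅
  | .var _ => ∅
  | .or φ ψ => φ.boundVars ∪ ψ.boundVars
  | .and φ ψ => φ.boundVars ∪ ψ.boundVars
  | .dia _ φ => φ.boundVars
  | .box _ φ => φ.boundVars
  | .mu X φ => {X} ∪ φ.boundVars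
  | .nu X φ => {X} ∪ φ.boundVars

/-- The list of bound propositional variables, with multiplicity. -/
def boundList : MuF L 𝒳 Act V → List (V ⊕ V)
  | .lit _ => []
  | .var _ => []
  | .or φ ψ => φ.boundList ++ ψ.boundList
  | .and φ ψ => φ.boundList ++ ψ.boundList
  | .dia _ φ => φ.boundList
  | .box _ φ => φ.boundList
  | .mu X φ => X :: φ.boundList
  | .nu X φ => X :: φ.boundList

/-- Every propositional variable is bound at most once. -/
def BoundOnce (φ : MuF L 𝒳 Act V) : Prop := (φ.boundList.map unbar).Nodup

/-- The transition symbols occurring in a formula. -/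
def acts : MuF L 𝒳 Act V → Set Act
  | .lit _ => ∅
  | .var _ => ∅
  | .or φ ψ => φ.acts ∪ ψ.acts
  | .and φ ψ => φ.acts ∪ ψ.acts
  | .dia a φ => {a} ∪ φ.acts
  | .box a φ => {a} ∪ φ.acts
  | .mu _ φ => φ.acts
  | .nu _ φ => φ.acts

/-- The complement `φ̄` of an `Lμ_𝒱`-formula. -/
def compl : MuF L 𝒳 Act V → MuF L 𝒳 Act V
  | .lit p => .lit p.neg
  | .var X => .var (bar X)
  | .or φ ψ => .and φ.compl ψ.compl
  | .and φ ψ => .or φ.compl ψ.compl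
  | .dia a φ => .box a φ.compl
  | .box a φ => .dia a φ.compl
  | .mu X φ => .nu (bar X) φ.compl
  | .nu X φ => .mu (bar X) φ.compl

/-- Implication `φ → ψ`, an abbreviation for `φ̄ ∨ ψ`. -/
def imp (φ ψ : MuF L 𝒳 Act V) : MuF L 𝒳 Act V := .or φ.compl ψ

/-- Bi-implication `φ ↔ ψ`. -/
def iff (φ ψ : MuF L 𝒳 Act V) : MuF L 𝒳 Act V := .and (imp φ ψ) (imp ψ φ)

variable [DecidableEq V]

/-- Substitution `φ[ψ/X]` of `ψ` for all free occurrences of the propositional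
variable `X` (and of `ψ̄` for all free occurrences of its complement). -/
def subst (X : V ⊕ V) (ψ : MuF L 𝒳 Act V) : MuF L 𝒳 Act V → MuF L 𝒳 Act V
  | .lit p => .lit p
  | .var Y => if Y = X then ψ else if Y = bar X then ψ.compl else .var Y
  | .or φ₁ φ₂ => .or (subst X ψ φ₁) (subst X ψ φ₂)
  | .and φ₁ φ₂ => .and (subst X ψ φ₁) (subst X ψ φ₂)
  | .dia a φ => .dia a (subst X ψ φ)
  | .box a φ => .box a (subst X ψ φ)
  | .mu Y φ => if X = Y ∨ X = bar Y then .mu Y φ else .mu Y (subst X ψ φ)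
  | .nu Y φ => if X = Y ∨ X = bar Y then .nu Y φ else .nu Y (subst X ψ φ)

/-- `X` is free for `ψ` in `φ`: no free occurrence of `X` in `φ` is in the scope of a
fixpoint operator binding a free propositional variable of `ψ`. -/
def FreeFor (X : V ⊕ V) (ψ : MuF L 𝒳 Act V) : MuF L 𝒳 Act V → Prop
  | .lit _ => True
  | .var _ => True
  | .or φ₁ φ₂ => FreeFor X ψ φ₁ ∧ FreeFor X ψ φ₂
  | .and φ₁ φ₂ => FreeFor X ψ φ₁ ∧ FreeFor X ψ φ₂
  | .dia _ φ => FreeFor X ψ φ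
  | .box _ φ => FreeFor X ψ φ
  | .mu Y φ => X = Y ∨ X = bar Y ∨
      (((X ∈ φ.freeVars ∨ bar X ∈ φ.freeVars) → (Y ∉ ψ.freeVars ∧ bar Y ∉ ψ.freeVars)) ∧
        FreeFor X ψ φ)
  | .nu Y φ => X = Y ∨ X = bar Y ∨
      (((X ∈ φ.freeVars ∨ bar X ∈ φ.freeVars) → (Y ∉ ψ.freeVars ∧ bar Y ∉ ψ.freeVars)) ∧
        FreeFor X ψ φ)

end MuF

/-! ## Semantics of the first-order modal μ-calculus -/

section MuSem

variable {L : Language} {𝒳 Act V : Type*} {M : Type*} [L.Structure M] [DecidableEq V]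

/-- The extension of a valuation `Ω : 𝒱 → 𝒫(𝒮)` to barred propositional variables,
with `Ω(X̄) = 𝒮 ∖ Ω(X)`. -/
def barVal (Ω : V → Set (𝒳 → M)) : V ⊕ V → Set (𝒳 → M) :=
  Sum.elim Ω (fun x => (Ω x)ᶜ)

/-- The modified valuation `Ω[E/X]` for `X ∈ 𝒱̄`. -/
def modif (Ω : V → Set (𝒳 → M)) : V ⊕ V → Set (𝒳 → M) → V → Set (𝒳 → M)
  | .inl x, E => Function.update Ω x E
  | .inr x, E => Function.update Ω x Eᶜ

variable (tr : Act → (𝒳 → M) → (𝒳 → M) → Prop)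

/-- Denotational semantics of `Lμ_𝒱`-formulas. -/
def MuF.sem : MuF L 𝒳 Act V → (V → Set (𝒳 → M)) → Set (𝒳 → M)
  | .lit p, _ => p.sem
  | .var X, Ω => barVal Ω X
  | .or φ ψ, Ω => φ.sem Ω ∪ ψ.sem Ω
  | .and φ ψ, Ω => φ.sem Ω ∩ ψ.sem Ω
  | .dia a φ, Ω => {ω | ∃ ν, tr a ω ν ∧ ν ∈ φ.sem Ω}
  | .box a φ, Ω => {ω | ∀ ν, tr a ω ν → ν ∈ φ.sem Ω}
  | .mu X φ, Ω => ⋂₀ {D | φ.sem (modif Ω X D) ⊆ D}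
  | .nu X φ, Ω => ⋃₀ {D | D ⊆ φ.sem (modif Ω X D)}

end MuSem

/-! ## Syntax of first-order game logic -/

universe uL vL u𝒳 uA uV

mutual
/-- Formulas of first-order game logic `GL_𝒱`. -/
inductive GLF (L : Language) (𝒳 : Type u𝒳) (Act : Type uA) (V : Type uV) where
  | lit (p : Lit L 𝒳)
  | var (X : V)
  | not (φ : GLF L 𝒳 Act V)
  | or (φ₁ φ₂ : GLF L 𝒳 Act V)
  | dia (γ : GLG L 𝒳 Act V) (φ : GLF L 𝒳 Act V)

/-- Games of first-order game logic `GL_𝒱`. -/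
inductive GLG (L : Language) (𝒳 : Type u𝒳) (Act : Type uA) (V : Type uV) where
  | act (a : Act)
  | test (φ : GLF L 𝒳 Act V)
  | choice (γ₁ γ₂ : GLG L 𝒳 Act V)
  | seq (γ₁ γ₂ : GLG L 𝒳 Act V)
  | star (γ : GLG L 𝒳 Act V)
  | dual (γ : GLG L 𝒳 Act V)
end

section GLDefs

variable {L : Language} {𝒳 Act V : Type*}

mutual
/-- Propositional variables occurring in a game-logic formula. -/
def GLF.pvars : GLF L 𝒳 Act V → Set V
  | .lit _ => ∅
  | .var X => {X}
  | .not φ => φ.pvars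
  | .or φ ψ => φ.pvars ∪ ψ.pvars
  | .dia γ φ => γ.pvars ∪ φ.pvars

/-- Propositional variables occurring in a game. -/
def GLG.pvars : GLG L 𝒳 Act V → Set V
  | .act _ => ∅
  | .test φ => φ.pvars
  | .choice γ₁ γ₂ => γ₁.pvars ∪ γ₂.pvars
  | .seq γ₁ γ₂ => γ₁.pvars ∪ γ₂.pvars
  | .star γ => γ.pvars
  | .dual γ => γ.pvars
end

mutual
/-- Transition symbols occurring in a game-logic formula. -/
def GLF.acts : GLF L 𝒳 Act V → Set Act
  | .lit _ => ∅
  | .var _ => ∅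
  | .not φ => φ.acts
  | .or φ ψ => φ.acts ∪ ψ.acts
  | .dia γ φ => γ.acts ∪ φ.acts

/-- Transition symbols occurring in a game. -/
def GLG.acts : GLG L 𝒳 Act V → Set Act
  | .act a => {a}
  | .test φ => φ.acts
  | .choice γ₁ γ₂ => γ₁.acts ∪ γ₂.acts
  | .seq γ₁ γ₂ => γ₁.acts ∪ γ₂.acts
  | .star γ => γ.acts
  | .dual γ => γ.acts
end

variable [DecidableEq V]

mutual
/-- Substitution of the game-logic formula `χ` for the propositional variable `X`
(everywhere, including inside tests of games). -/
def GLF.psub (X : V) (χ : GLF L 𝒳 Act V) : GLF L 𝒳 Act V → GLF L 𝒳 Act V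
  | .lit p => .lit p
  | .var Y => if Y = X then χ else .var Y
  | .not φ => .not (GLF.psub X χ φ)
  | .or φ ψ => .or (GLF.psub X χ φ) (GLF.psub X χ ψ)
  | .dia γ φ => .dia (GLG.psub X χ γ) (GLF.psub X χ φ)

def GLG.psub (X : V) (χ : GLF L 𝒳 Act V) : GLG L 𝒳 Act V → GLG L 𝒳 Act V
  | .act a => .act a
  | .test φ => .test (GLF.psub X χ φ)
  | .choice γ₁ γ₂ => .choice (GLG.psub X χ γ₁) (GLG.psub X χ γ₂)
  | .seq γ₁ γ₂ => .seq (GLG.psub X χ γ₁) (GLG.psub X χ γ₂)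
  | .star γ => .star (GLG.psub X χ γ)
  | .dual γ => .dual (GLG.psub X χ γ)
end

/-- Implication in game logic. -/
def GLF.gimp (φ ψ : GLF L 𝒳 Act V) : GLF L 𝒳 Act V := .or (.not φ) ψ

/-- Conjunction in game logic. -/
def GLF.gand (φ ψ : GLF L 𝒳 Act V) : GLF L 𝒳 Act V := .not (.or (.not φ) (.not ψ))

/-- Bi-implication in game logic. -/
def GLF.giff (φ ψ : GLF L 𝒳 Act V) : GLF L 𝒳 Act V := GLF.gand (GLF.gimp φ ψ) (GLF.gimp ψ φ)

end GLDefs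

/-! ## Semantics of first-order game logic -/

section GLSem

variable {L : Language} {𝒳 Act V : Type*} {M : Type*} [L.Structure M]
variable (tr : Act → (𝒳 → M) → (𝒳 → M) → Prop)

mutual
/-- Denotational semantics of game-logic formulas. -/
def GLF.sem : GLF L 𝒳 Act V → (V → Set (𝒳 → M)) → Set (𝒳 → M)
  | .lit p, _ => p.sem
  | .var X, Ω => Ω X
  | .not φ, Ω => (φ.sem Ω)ᶜ
  | .or φ ψ, Ω => φ.sem Ω ∪ ψ.sem Ω
  | .dia γ φ, Ω => γ.sem Ω (φ.sem Ω)

/-- Denotational semantics of games: `γ.sem tr Ω D` is the set of states from which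
Angel has a winning strategy in `γ` to reach `D`. -/
def GLG.sem : GLG L 𝒳 Act V → (V → Set (𝒳 → M)) → Set (𝒳 → M) → Set (𝒳 → M)
  | .act a, _, D => {ω | ∃ ν, tr a ω ν ∧ ν ∈ D}
  | .test φ, Ω, D => φ.sem Ω ∩ D
  | .choice γ₁ γ₂, Ω, D => γ₁.sem Ω D ∪ γ₂.sem Ω D
  | .seq γ₁ γ₂, Ω, D => γ₁.sem Ω (γ₂.sem Ω D)
  | .star γ, Ω, D => ⋂₀ {Z | D ∪ γ.sem Ω Z ⊆ Z}
  | .dual γ, Ω, D => (γ.sem Ω Dᶜ)ᶜ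
end

end GLSem


/-! ## The translation ♯ from game logic into the μ-calculus -/

section Sharp

variable {L : Language} {𝒳 Act V : Type*}

/-- The translation `♯` of `GL_𝒱`-formulas into `Lμ_𝒱`-formulas, as a relation
(the clause for `⟨γ*⟩φ` chooses a fresh propositional variable `X`). -/
inductive Sharp : GLF L 𝒳 Act V → MuF L 𝒳 Act V → Prop
  | lit (p) : Sharp (.lit p) (.lit p)
  | var (X) : Sharp (.var X) (.var (Sum.inl X))
  | not {φ m} : Sharp φ m → Sharp (.not φ) m.compl
  | or {φ₁ φ₂ m₁ m₂} : Sharp φ₁ m₁ → Sharp φ₂ m₂ → Sharp (.or φ₁ φ₂) (.or m₁ m₂)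
  | act {a φ m} : Sharp φ m → Sharp (.dia (.act a) φ) (.dia a m)
  | test {φ₁ φ₂ m₁ m₂} : Sharp φ₁ m₁ → Sharp φ₂ m₂ → Sharp (.dia (.test φ₁) φ₂) (.and m₁ m₂)
  | choice {γ₁ γ₂ φ m₁ m₂} : Sharp (.dia γ₁ φ) m₁ → Sharp (.dia γ₂ φ) m₂ →
      Sharp (.dia (.choice γ₁ γ₂) φ) (.or m₁ m₂)
  | seq {γ₁ γ₂ φ m} : Sharp (.dia γ₁ (.dia γ₂ φ)) m → Sharp (.dia (.seq γ₁ γ₂) φ) m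
  | dual {γ φ m} : Sharp (.dia γ (.not φ)) m → Sharp (.dia (.dual γ) φ) m.compl
  | star {γ φ X m} : X ∉ φ.pvars → X ∉ γ.pvars →
      Sharp (.or φ (.dia γ (.var X))) m →
      Sharp (.dia (.star γ) φ) (.mu (Sum.inl X) m)

end Sharp

/-! ## The translation of μ-calculus formulas into games (dictionaries) -/

section Flat

variable {L : Language} {𝒳 Act V : Type*} [DecidableEq V]

/-- A barred propositional variable as a game logic formula (`X̄` is `¬X`). -/
def gvar : V ⊕ V → GLF L 𝒳 Act V := Sum.elim .var (fun x => .not (.var x))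

/-- A canonical true game-logic formula `⊤`. -/
def glTrue (ℓ : 𝒳) : GLF L 𝒳 Act V := .lit (.eq (.var ℓ) (.var ℓ))

/-- A canonical false game-logic formula `⊥`. -/
def glFalse (ℓ : 𝒳) : GLF L 𝒳 Act V := .lit (.ne (.var ℓ) (.var ℓ))

/-- The dictionary `ϑ[X]`, treating `X` (and `X̄`) as bound. -/
def dictUp (ϑ : V → Bool) (X : V ⊕ V) : V → Bool := Function.update ϑ (unbar X) true

/-- A dictionary is compatible with a formula iff it takes value `0` on all
propositional variables bound in the formula. -/
def Compat (ϑ : V → Bool) (φ : MuF L 𝒳 Act V) : Prop :=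
  ∀ X ∈ φ.boundVars, ϑ (unbar X) = false

/-- Demonic choice `γ₁ ∩ γ₂`. -/
def GLG.dchoice (γ₁ γ₂ : GLG L 𝒳 Act V) : GLG L 𝒳 Act V := .dual (.choice (.dual γ₁) (.dual γ₂))

/-- Demonic repetition `γ^×`. -/
def GLG.cross (γ : GLG L 𝒳 Act V) : GLG L 𝒳 Act V := .dual (.star (.dual γ))

/-- The translation `φ^ϑ` of an `Lμ_𝒱`-formula into a `GL_𝒱`-game, relative to a
dictionary `ϑ`, a control variable `ℓ`, constant symbols `c_X`, and the deterministic
assignment transition symbols `asn`. -/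
def trGame (ℓ : 𝒳) (c : V ⊕ V → L.Constants) (asn : 𝒳 → L.Term 𝒳 → Act) :
    MuF L 𝒳 Act V → (V → Bool) → GLG L 𝒳 Act V
  | .lit p, _ => .seq (.test (.lit p)) (.dual (.test (glFalse ℓ)))
  | .var X, ϑ =>
      if ϑ (unbar X) then .act (asn ℓ (Language.Constants.term (c X)))
      else .seq (.test (gvar X)) (.dual (.test (glFalse ℓ)))
  | .or φ ψ, ϑ => .choice (trGame ℓ c asn φ ϑ) (trGame ℓ c asn ψ ϑ)
  | .and φ ψ, ϑ => GLG.dchoice (trGame ℓ c asn φ ϑ) (trGame ℓ c asn ψ ϑ)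
  | .dia a φ, ϑ => .seq (.act a) (trGame ℓ c asn φ ϑ)
  | .box a φ, ϑ => .seq (.dual (.act a)) (trGame ℓ c asn φ ϑ)
  | .mu X φ, ϑ => .seq (.act (asn ℓ (Language.Constants.term (c X))))
      (.seq (.star (.seq (.test (.lit (.eq (.var ℓ) (Language.Constants.term (c X)))))
                         (trGame ℓ c asn φ (dictUp ϑ X))))
            (.test (.lit (.ne (.var ℓ) (Language.Constants.term (c X))))))
  | .nu X φ, ϑ => .seq (.act (asn ℓ (Language.Constants.term (c X))))
      (.seq (GLG.cross (.seq (.dual (.test (.lit (.eq (.var ℓ) (Language.Constants.term (c X))))))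
                             (trGame ℓ c asn φ (dictUp ϑ X))))
            (.dual (.test (.lit (.ne (.var ℓ) (Language.Constants.term (c X)))))))

/-- The translation `ψ♭ = ⟨ψ^η⟩⊤` of an `Lμ`-formula into a `GL`-formula,
where `η` is the dictionary that is `0` everywhere. -/
def flatF (ℓ : 𝒳) (c : V ⊕ V → L.Constants) (asn : 𝒳 → L.Term 𝒳 → Act)
    (ψ : MuF L 𝒳 Act V) : GLF L 𝒳 Act V :=
  .dia (trGame ℓ c asn ψ (fun _ => false)) (glTrue ℓ)

/-- The object variables occurring (in literals) in a μ-calculus formula. -/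
def MuF.ovars : MuF L 𝒳 Act V → Set 𝒳
  | .lit p => p.ovars
  | .var _ => ∅
  | .or φ ψ => φ.ovars ∪ ψ.ovars
  | .and φ ψ => φ.ovars ∪ ψ.ovars
  | .dia _ φ => φ.ovars
  | .box _ φ => φ.ovars
  | .mu _ φ => φ.ovars
  | .nu _ φ => φ.ovars

variable {M : Type*} [DecidableEq 𝒳]

/-- Object variable `y` is independent of transition `a` under interpretation `tr`:
whenever `(ω,ν) ∈ ⟦a⟧` then also `(ω[b/y],ν[b/y]) ∈ ⟦a⟧`. -/
def IndepAct (tr : Act → (𝒳 → M) → (𝒳 → M) → Prop) (y : 𝒳) (a : Act) : Prop :=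
  ∀ (b : M) ω ν, tr a ω ν → tr a (Function.update ω y b) (Function.update ν y b)

/-- A valuation is independent of the object variable `y`. -/
def IndepVal (y : 𝒳) (Ω : V → Set (𝒳 → M)) : Prop :=
  ∀ (X : V) (b : M) (ω : 𝒳 → M), ω ∈ Ω X ↔ Function.update ω y b ∈ Ω X

end Flat

/-! ## Signatures with deterministic and nondeterministic assignments -/

/-- Transition symbols of a signature with deterministic and nondeterministic
assignments: base symbols from `A₀`, deterministic assignments `x := θ`, and
nondeterministic assignments `x := *`. -/
inductive CAct (L : Language) (𝒳 : Type u𝒳) (A₀ : Type uA) where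
  | base (a : A₀)
  | asn (x : 𝒳) (θ : L.Term 𝒳)
  | rand (x : 𝒳)

section CActDefs

variable {L : Language} {𝒳 A₀ : Type*} [DecidableEq 𝒳]

/-- Substitution of the term `θ` for the object variable `x` in a term. -/
def tsub (x : 𝒳) (θ : L.Term 𝒳) (t : L.Term 𝒳) : L.Term 𝒳 :=
  t.subst (fun y => if y = x then θ else .var y)

/-- Swapping the object variables `x` and `y` in a term. -/
def tswap (x y : 𝒳) (t : L.Term 𝒳) : L.Term 𝒳 := t.relabel (Equiv.swap x y)

/-- Substitution in literals. -/
def Lit.osub (x : 𝒳) (θ : L.Term 𝒳) : Lit L 𝒳 → Lit L 𝒳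
  | .eq t₁ t₂ => .eq (tsub x θ t₁) (tsub x θ t₂)
  | .ne t₁ t₂ => .ne (tsub x θ t₁) (tsub x θ t₂)
  | .rel R ts => .rel R (fun i => tsub x θ (ts i))
  | .nrel R ts => .nrel R (fun i => tsub x θ (ts i))

/-- Swapping object variables in literals. -/
def Lit.oswap (x y : 𝒳) : Lit L 𝒳 → Lit L 𝒳
  | .eq t₁ t₂ => .eq (tswap x y t₁) (tswap x y t₂)
  | .ne t₁ t₂ => .ne (tswap x y t₁) (tswap x y t₂)
  | .rel R ts => .rel R (fun i => tswap x y (ts i))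
  | .nrel R ts => .nrel R (fun i => tswap x y (ts i))

namespace CAct

/-- Whether the transition binds (assigns) the object variable `x`. -/
def bindsB (x : 𝒳) : CAct L 𝒳 A₀ → Bool
  | .base _ => false
  | .asn y _ => decide (y = x)
  | .rand y => decide (y = x)

/-- Substitution of `θ` for `x` in a transition symbol. -/
def osub (x : 𝒳) (θ : L.Term 𝒳) : CAct L 𝒳 A₀ → CAct L 𝒳 A₀
  | .base a => .base a
  | .asn y η => .asn y (tsub x θ η)
  | .rand y => .rand y

/-- Renaming `x ↔ y` in a transition symbol, using the signature's closure `sw`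
of base transition symbols under renaming. -/
def oswap (sw : 𝒳 → 𝒳 → A₀ → A₀) (x y : 𝒳) : CAct L 𝒳 A₀ → CAct L 𝒳 A₀
  | .base a => .base (sw x y a)
  | .asn z η => .asn (Equiv.swap x y z) (tswap x y η)
  | .rand z => .rand (Equiv.swap x y z)

/-- The object variables a transition symbol may depend on, given an interface
`fvB` for base transition symbols. -/
def ovarsF (fvB : A₀ → Set 𝒳) : CAct L 𝒳 A₀ → Set 𝒳
  | .base b => fvB b
  | .asn x θ => {x} ∪ tvars θ
  | .rand x => {x}

/-- The object variables bound (assigned) by a transition symbol. -/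
def obinds : CAct L 𝒳 A₀ → Set 𝒳
  | .base _ => ∅
  | .asn x _ => {x}
  | .rand x => {x}

/-- The base transition symbols of a transition symbol. -/
def bases : CAct L 𝒳 A₀ → Set A₀
  | .base a => {a}
  | .asn _ _ => ∅
  | .rand _ => ∅

end CAct

/-- Interpretation of transition symbols in an assignment and quantifier structure:
base symbols are interpreted by `trb`, deterministic assignments update the assigned
variable to the value of the term, nondeterministic assignments update it arbitrarily. -/
def ctrans {M : Type*} [L.Structure M] (trb : A₀ → (𝒳 → M) → (𝒳 → M) → Prop) :
    CAct L 𝒳 A₀ → (𝒳 → M) → (𝒳 → M) → Prop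
  | .base b => trb b
  | .asn x θ => fun ω ν => ν = Function.update ω x (θ.realize ω)
  | .rand x => fun ω ν => ∃ e : M, ν = Function.update ω x e

end CActDefs

/-! ## Syntactic operations on μ-calculus formulas over such signatures -/

section MuCalcOps

variable {L : Language} {𝒳 V A₀ : Type*} [DecidableEq 𝒳] [DecidableEq V]

namespace MuF

/-- Substitution `φ[θ/x]` of a term for an object variable. Base transition symbols
are unaffected; substitution stops under transitions binding `x`. -/
def osub (x : 𝒳) (θ : L.Term 𝒳) :
    MuF L 𝒳 (CAct L 𝒳 A₀) V → MuF L 𝒳 (CAct L 𝒳 A₀) V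
  | .lit p => .lit (p.osub x θ)
  | .var X => .var X
  | .or φ ψ => .or (osub x θ φ) (osub x θ ψ)
  | .and φ ψ => .and (osub x θ φ) (osub x θ ψ)
  | .dia a φ => .dia (a.osub x θ) (if a.bindsB x then φ else osub x θ φ)
  | .box a φ => .box (a.osub x θ) (if a.bindsB x then φ else osub x θ φ)
  | .mu X φ => .mu X (osub x θ φ)
  | .nu X φ => .nu X (osub x θ φ)

/-- Renaming `φₓʸ`, swapping the object variables `x` and `y` throughout. -/
def oswap (sw : 𝒳 → 𝒳 → A₀ → A₀) (x y : 𝒳) :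
    MuF L 𝒳 (CAct L 𝒳 A₀) V → MuF L 𝒳 (CAct L 𝒳 A₀) V
  | .lit p => .lit (p.oswap x y)
  | .var X => .var X
  | .or φ ψ => .or (oswap sw x y φ) (oswap sw x y ψ)
  | .and φ ψ => .and (oswap sw x y φ) (oswap sw x y ψ)
  | .dia a φ => .dia (a.oswap sw x y) (oswap sw x y φ)
  | .box a φ => .box (a.oswap sw x y) (oswap sw x y φ)
  | .mu X φ => .mu X (oswap sw x y φ)
  | .nu X φ => .nu X (oswap sw x y φ)

/-- The object variables a formula may depend on. -/
def ovarsF (fvB : A₀ → Set 𝒳) : MuF L 𝒳 (CAct L 𝒳 A₀) V → Set 𝒳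
  | .lit p => p.ovars
  | .var _ => ∅
  | .or φ ψ => ovarsF fvB φ ∪ ovarsF fvB ψ
  | .and φ ψ => ovarsF fvB φ ∪ ovarsF fvB ψ
  | .dia a φ => a.ovarsF fvB ∪ ovarsF fvB φ
  | .box a φ => a.ovarsF fvB ∪ ovarsF fvB φ
  | .mu _ φ => ovarsF fvB φ
  | .nu _ φ => ovarsF fvB φ

/-- The object variables bound by some transition occurring in the formula. -/
def obindsC : MuF L 𝒳 (CAct L 𝒳 A₀) V → Set 𝒳
  | .lit _ => ∅
  | .var _ => ∅
  | .or φ ψ => obindsC φ ∪ obindsC ψ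
  | .and φ ψ => obindsC φ ∪ obindsC ψ
  | .dia a φ => a.obinds ∪ obindsC φ
  | .box a φ => a.obinds ∪ obindsC φ
  | .mu _ φ => obindsC φ
  | .nu _ φ => obindsC φ

/-- The base transition symbols occurring in a formula. -/
def baseActs : MuF L 𝒳 (CAct L 𝒳 A₀) V → Set A₀
  | .lit _ => ∅
  | .var _ => ∅
  | .or φ ψ => baseActs φ ∪ baseActs ψ
  | .and φ ψ => baseActs φ ∪ baseActs ψ
  | .dia a φ => a.bases ∪ baseActs φ
  | .box a φ => a.bases ∪ baseActs φ
  | .mu _ φ => baseActs φ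
  | .nu _ φ => baseActs φ

end MuF

/-- Admissibility of the substitution `φ[θ/x]` for the axiom `∃I`. -/
def OAdm (fvB : A₀ → Set 𝒳) (x : 𝒳) (θ : L.Term 𝒳)
    (φ : MuF L 𝒳 (CAct L 𝒳 A₀) V) : Prop :=
  x ∉ φ.ovarsF fvB ∨
    (φ.baseActs = ∅ ∧ (∀ y ∈ tvars θ, y ∉ φ.obindsC) ∧ φ.freeVars = ∅)

end MuCalcOps

/-! ## Propositional tautologies and equality axioms for the μ-calculus -/

section MuAx

variable {L : Language} {𝒳 Act V : Type*} [DecidableEq V]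

namespace MuF

/-- Purely propositional formulas: built from propositional variables by `∨` and `∧`. -/
def PureProp : MuF L 𝒳 Act V → Prop
  | .var _ => True
  | .or φ ψ => PureProp φ ∧ PureProp ψ
  | .and φ ψ => PureProp φ ∧ PureProp ψ
  | _ => False

/-- Evaluation of a purely propositional formula under a Boolean assignment,
interpreting bars as negation. -/
def propEval (v : V → Prop) : MuF L 𝒳 Act V → Prop
  | .var (.inl X) => v X
  | .var (.inr X) => ¬ v X
  | .or φ ψ => propEval v φ ∨ propEval v ψ
  | .and φ ψ => propEval v φ ∧ propEval v ψ
  | _ => False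

end MuF

/-- Propositional tautologies: the smallest set of formulas closed under substitution
of propositional variables that contains all valid purely propositional formulas. -/
inductive MuTaut : MuF L 𝒳 Act V → Prop
  | base {φ : MuF L 𝒳 Act V} : φ.PureProp → (∀ v : V → Prop, φ.propEval v) → MuTaut φ
  | subst {φ : MuF L 𝒳 Act V} (X : V ⊕ V) (ψ : MuF L 𝒳 Act V) :
      MuTaut φ → MuTaut (MuF.subst X ψ φ)

/-- Iterated implication `φ₁ → (φ₂ → ⋯ → χ)`. -/
def impChain : List (MuF L 𝒳 Act V) → MuF L 𝒳 Act V → MuF L 𝒳 Act V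
  | [], χ => χ
  | φ :: t, χ => φ.imp (impChain t χ)

/-- The first-order equality axioms: equality is a congruence with respect to the
function and predicate symbols of the first-order signature. -/
inductive MuEqAx : MuF L 𝒳 Act V → Prop
  | refl (t : L.Term 𝒳) : MuEqAx (.lit (.eq t t))
  | symm (t₁ t₂ : L.Term 𝒳) : MuEqAx ((MuF.lit (.eq t₁ t₂)).imp (.lit (.eq t₂ t₁)))
  | trans (t₁ t₂ t₃ : L.Term 𝒳) :
      MuEqAx ((MuF.lit (.eq t₁ t₂)).imp ((MuF.lit (.eq t₂ t₃)).imp (.lit (.eq t₁ t₃))))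
  | congFun {n : ℕ} (f : L.Functions n) (ts ts' : Fin n → L.Term 𝒳) :
      MuEqAx (impChain ((List.finRange n).map fun i => MuF.lit (.eq (ts i) (ts' i)))
        (.lit (.eq (Language.Term.func f ts) (Language.Term.func f ts'))))
  | congRel {n : ℕ} (R : L.Relations n) (ts ts' : Fin n → L.Term 𝒳) :
      MuEqAx (impChain ((List.finRange n).map fun i => MuF.lit (.eq (ts i) (ts' i)))
        ((MuF.lit (.rel R ts)).imp (.lit (.rel R ts'))))

/-- Renaming of bound propositional variables (α-equivalence). -/
inductive AEq : MuF L 𝒳 Act V → MuF L 𝒳 Act V → Prop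
  | refl (φ) : AEq φ φ
  | symm {φ ψ} : AEq φ ψ → AEq ψ φ
  | trans {φ ψ χ} : AEq φ ψ → AEq ψ χ → AEq φ χ
  | or {φ₁ φ₂ ψ₁ ψ₂} : AEq φ₁ ψ₁ → AEq φ₂ ψ₂ → AEq (.or φ₁ φ₂) (.or ψ₁ ψ₂)
  | and {φ₁ φ₂ ψ₁ ψ₂} : AEq φ₁ ψ₁ → AEq φ₂ ψ₂ → AEq (.and φ₁ φ₂) (.and ψ₁ ψ₂)
  | dia (a) {φ ψ} : AEq φ ψ → AEq (.dia a φ) (.dia a ψ)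
  | box (a) {φ ψ} : AEq φ ψ → AEq (.box a φ) (.box a ψ)
  | mu (X) {φ ψ} : AEq φ ψ → AEq (.mu X φ) (.mu X ψ)
  | nu (X) {φ ψ} : AEq φ ψ → AEq (.nu X φ) (.nu X ψ)
  | muRename {X Y : V ⊕ V} {φ : MuF L 𝒳 Act V} : Y ∉ φ.mentions → bar Y ∉ φ.mentions →
      AEq (.mu X φ) (.mu Y (MuF.subst X (.var Y) φ))
  | nuRename {X Y : V ⊕ V} {φ : MuF L 𝒳 Act V} : Y ∉ φ.mentions → bar Y ∉ φ.mentions →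
      AEq (.nu X φ) (.nu Y (MuF.subst X (.var Y) φ))

end MuAx

/-! ## The Hilbert-style proof calculus for the first-order modal μ-calculus -/

section MuCalc

variable {L : Language} {𝒳 V A₀ : Type*} [DecidableEq 𝒳] [DecidableEq V]

/-- Provability in the `Lμ`-calculus from the theory `T`, by a derivation all of whose
formulas belong to `S`. The calculus has rules `MP`, `Mₐ` and `FPμ`, the axioms
`μ` (unfolding), `∃I`, `V`, `⟨:=⟩`, all propositional tautologies and equality axioms,
and permits renaming of bound propositional variables. -/
inductive MuPrvIn (sw : 𝒳 → 𝒳 → A₀ → A₀) (fvB : A₀ → Set 𝒳)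
    (S : Set (MuF L 𝒳 (CAct L 𝒳 A₀) V)) (T : Set (MuF L 𝒳 (CAct L 𝒳 A₀) V)) :
    MuF L 𝒳 (CAct L 𝒳 A₀) V → Prop
  | hyp {φ} : φ ∈ T → φ ∈ S → MuPrvIn sw fvB S T φ
  | taut {φ} : MuTaut φ → φ.WF → φ ∈ S → MuPrvIn sw fvB S T φ
  | eqax {φ} : MuEqAx φ → φ ∈ S → MuPrvIn sw fvB S T φ
  | mufix {X φ} : (MuF.mu X φ).WF → MuF.FreeFor X (.mu X φ) φ →
      (MuF.subst X (.mu X φ) φ).iff (.mu X φ) ∈ S →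
      MuPrvIn sw fvB S T ((MuF.subst X (.mu X φ) φ).iff (.mu X φ))
  | existsI {x θ φ} : φ.WF → OAdm fvB x θ φ →
      (φ.osub x θ).imp (.dia (.rand x) φ) ∈ S →
      MuPrvIn sw fvB S T ((φ.osub x θ).imp (.dia (.rand x) φ))
  | vac {x ψ} : ψ.WF → x ∉ ψ.ovarsF fvB → ψ.freeVars = ∅ →
      (MuF.dia (.rand x) ψ).imp ψ ∈ S →
      MuPrvIn sw fvB S T ((MuF.dia (.rand x) ψ).imp ψ)
  | asgn {x y : 𝒳} {θ : L.Term 𝒳} {φ} : φ.WF → y ≠ x → y ∉ tvars θ →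
      y ∉ φ.ovarsF fvB → φ.freeVars = ∅ →
      (MuF.dia (.asn x θ) φ).iff
        (.dia (.rand y) (.and (.lit (.eq (.var y) θ)) (φ.oswap sw x y))) ∈ S →
      MuPrvIn sw fvB S T ((MuF.dia (.asn x θ) φ).iff
        (.dia (.rand y) (.and (.lit (.eq (.var y) θ)) (φ.oswap sw x y))))
  | mp {φ ψ} : MuPrvIn sw fvB S T (ψ.imp φ) → MuPrvIn sw fvB S T ψ → φ ∈ S →
      MuPrvIn sw fvB S T φ
  | mono (a : CAct L 𝒳 A₀) {ψ φ} : MuPrvIn sw fvB S T (ψ.imp φ) →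
      (MuF.dia a ψ).imp (.dia a φ) ∈ S →
      MuPrvIn sw fvB S T ((MuF.dia a ψ).imp (.dia a φ))
  | fpmu {X ψ φ} : MuF.FreeFor X φ ψ → (MuF.mu X ψ).WF →
      MuPrvIn sw fvB S T ((MuF.subst X φ ψ).imp φ) → (MuF.mu X ψ).imp φ ∈ S →
      MuPrvIn sw fvB S T ((MuF.mu X ψ).imp φ)
  | alpha {φ ψ} : AEq φ ψ → MuPrvIn sw fvB S T φ → ψ ∈ S → MuPrvIn sw fvB S T ψ

/-- Provability `T ⊢_Lμ φ` in the `Lμ`-calculus. -/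
abbrev MuPrv (sw : 𝒳 → 𝒳 → A₀ → A₀) (fvB : A₀ → Set 𝒳)
    (T : Set (MuF L 𝒳 (CAct L 𝒳 A₀) V)) : MuF L 𝒳 (CAct L 𝒳 A₀) V → Prop :=
  MuPrvIn sw fvB Set.univ T

end MuCalc

/-! ## Syntactic operations on game logic formulas over assignment signatures -/

section GLCalcOps

variable {L : Language} {𝒳 V A₀ : Type*} [DecidableEq 𝒳] [DecidableEq V]

mutual
/-- Substitution `φ[θ/x]` of a term for an object variable in game logic formulas. -/
def GLF.osub (x : 𝒳) (θ : L.Term 𝒳) :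
    GLF L 𝒳 (CAct L 𝒳 A₀) V → GLF L 𝒳 (CAct L 𝒳 A₀) V
  | .lit p => .lit (p.osub x θ)
  | .var X => .var X
  | .not φ => .not (GLF.osub x θ φ)
  | .or φ ψ => .or (GLF.osub x θ φ) (GLF.osub x θ ψ)
  | .dia γ φ => .dia (GLG.osub x θ γ) (GLF.osub x θ φ)

/-- Substitution of a term for an object variable in games. -/
def GLG.osub (x : 𝒳) (θ : L.Term 𝒳) :
    GLG L 𝒳 (CAct L 𝒳 A₀) V → GLG L 𝒳 (CAct L 𝒳 A₀) V
  | .act a => .act (a.osub x θ)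
  | .test φ => .test (GLF.osub x θ φ)
  | .choice γ₁ γ₂ => .choice (GLG.osub x θ γ₁) (GLG.osub x θ γ₂)
  | .seq γ₁ γ₂ => .seq (GLG.osub x θ γ₁) (GLG.osub x θ γ₂)
  | .star γ => .star (GLG.osub x θ γ)
  | .dual γ => .dual (GLG.osub x θ γ)
end

mutual
/-- Renaming `φₓʸ`, swapping the object variables `x` and `y` throughout. -/
def GLF.oswap (sw : 𝒳 → 𝒳 → A₀ → A₀) (x y : 𝒳) :
    GLF L 𝒳 (CAct L 𝒳 A₀) V → GLF L 𝒳 (CAct L 𝒳 A₀) V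
  | .lit p => .lit (p.oswap x y)
  | .var X => .var X
  | .not φ => .not (GLF.oswap sw x y φ)
  | .or φ ψ => .or (GLF.oswap sw x y φ) (GLF.oswap sw x y ψ)
  | .dia γ φ => .dia (GLG.oswap sw x y γ) (GLF.oswap sw x y φ)

def GLG.oswap (sw : 𝒳 → 𝒳 → A₀ → A₀) (x y : 𝒳) :
    GLG L 𝒳 (CAct L 𝒳 A₀) V → GLG L 𝒳 (CAct L 𝒳 A₀) V
  | .act a => .act (a.oswap sw x y)
  | .test φ => .test (GLF.oswap sw x y φ)
  | .choice γ₁ γ₂ => .choice (GLG.oswap sw x y γ₁) (GLG.oswap sw x y γ₂)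
  | .seq γ₁ γ₂ => .seq (GLG.oswap sw x y γ₁) (GLG.oswap sw x y γ₂)
  | .star γ => .star (GLG.oswap sw x y γ)
  | .dual γ => .dual (GLG.oswap sw x y γ)
end

mutual
/-- Object variables a game logic formula may depend on. -/
def GLF.ovarsF (fvB : A₀ → Set 𝒳) : GLF L 𝒳 (CAct L 𝒳 A₀) V → Set 𝒳
  | .lit p => p.ovars
  | .var _ => ∅
  | .not φ => GLF.ovarsF fvB φ
  | .or φ ψ => GLF.ovarsF fvB φ ∪ GLF.ovarsF fvB ψ
  | .dia γ φ => GLG.ovarsF fvB γ ∪ GLF.ovarsF fvB φ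

def GLG.ovarsF (fvB : A₀ → Set 𝒳) : GLG L 𝒳 (CAct L 𝒳 A₀) V → Set 𝒳
  | .act a => a.ovarsF fvB
  | .test φ => GLF.ovarsF fvB φ
  | .choice γ₁ γ₂ => GLG.ovarsF fvB γ₁ ∪ GLG.ovarsF fvB γ₂
  | .seq γ₁ γ₂ => GLG.ovarsF fvB γ₁ ∪ GLG.ovarsF fvB γ₂
  | .star γ => GLG.ovarsF fvB γ
  | .dual γ => GLG.ovarsF fvB γ
end

mutual
/-- Object variables bound by a transition occurring in a formula. -/
def GLF.obindsC : GLF L 𝒳 (CAct L 𝒳 A₀) V → Set 𝒳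
  | .lit _ => ∅
  | .var _ => ∅
  | .not φ => GLF.obindsC φ
  | .or φ ψ => GLF.obindsC φ ∪ GLF.obindsC ψ
  | .dia γ φ => GLG.obindsC γ ∪ GLF.obindsC φ

def GLG.obindsC : GLG L 𝒳 (CAct L 𝒳 A₀) V → Set 𝒳
  | .act a => a.obinds
  | .test φ => GLF.obindsC φ
  | .choice γ₁ γ₂ => GLG.obindsC γ₁ ∪ GLG.obindsC γ₂
  | .seq γ₁ γ₂ => GLG.obindsC γ₁ ∪ GLG.obindsC γ₂
  | .star γ => GLG.obindsC γ
  | .dual γ => GLG.obindsC γ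
end

mutual
/-- The base transition symbols occurring in a formula. -/
def GLF.baseActs : GLF L 𝒳 (CAct L 𝒳 A₀) V → Set A₀
  | .lit _ => ∅
  | .var _ => ∅
  | .not φ => GLF.baseActs φ
  | .or φ ψ => GLF.baseActs φ ∪ GLF.baseActs ψ
  | .dia γ φ => GLG.baseActs γ ∪ GLF.baseActs φ

def GLG.baseActs : GLG L 𝒳 (CAct L 𝒳 A₀) V → Set A₀
  | .act a => a.bases
  | .test φ => GLF.baseActs φ
  | .choice γ₁ γ₂ => GLG.baseActs γ₁ ∪ GLG.baseActs γ₂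
  | .seq γ₁ γ₂ => GLG.baseActs γ₁ ∪ GLG.baseActs γ₂
  | .star γ => GLG.baseActs γ
  | .dual γ => GLG.baseActs γ
end

/-- Admissibility of the substitution `φ[θ/x]` in game logic. -/
def GOAdm (fvB : A₀ → Set 𝒳) (x : 𝒳) (θ : L.Term 𝒳)
    (φ : GLF L 𝒳 (CAct L 𝒳 A₀) V) : Prop :=
  x ∉ φ.ovarsF fvB ∨ (φ.baseActs = ∅ ∧ ∀ y ∈ tvars θ, y ∉ φ.obindsC)

end GLCalcOps

/-! ## Propositional tautologies and equality axioms for game logic -/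

section GLAx

variable {L : Language} {𝒳 Act V : Type*} [DecidableEq V]

/-- Purely propositional game logic formulas. -/
def GLF.pPure : GLF L 𝒳 Act V → Prop
  | .var _ => True
  | .not φ => GLF.pPure φ
  | .or φ ψ => GLF.pPure φ ∧ GLF.pPure ψ
  | _ => False

/-- Evaluation of propositional game logic formulas. -/
def GLF.pEval (v : V → Prop) : GLF L 𝒳 Act V → Prop
  | .var X => v X
  | .not φ => ¬ GLF.pEval v φ
  | .or φ ψ => GLF.pEval v φ ∨ GLF.pEval v ψ
  | _ => False

/-- Propositional tautologies of game logic: closure of the valid purely propositional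
formulas under substitution of propositional variables. -/
inductive GLTaut : GLF L 𝒳 Act V → Prop
  | base {φ : GLF L 𝒳 Act V} : φ.pPure → (∀ v : V → Prop, φ.pEval v) → GLTaut φ
  | subst {φ : GLF L 𝒳 Act V} (X : V) (ψ : GLF L 𝒳 Act V) : GLTaut φ → GLTaut (GLF.psub X ψ φ)

/-- Iterated implication in game logic. -/
def gimpChain : List (GLF L 𝒳 Act V) → GLF L 𝒳 Act V → GLF L 𝒳 Act V
  | [], χ => χ
  | φ :: t, χ => φ.gimp (gimpChain t χ)

/-- The first-order equality axioms for game logic. -/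
inductive GLEqAx : GLF L 𝒳 Act V → Prop
  | refl (t : L.Term 𝒳) : GLEqAx (.lit (.eq t t))
  | symm (t₁ t₂ : L.Term 𝒳) : GLEqAx ((GLF.lit (.eq t₁ t₂)).gimp (.lit (.eq t₂ t₁)))
  | trans (t₁ t₂ t₃ : L.Term 𝒳) :
      GLEqAx ((GLF.lit (.eq t₁ t₂)).gimp ((GLF.lit (.eq t₂ t₃)).gimp (.lit (.eq t₁ t₃))))
  | congFun {n : ℕ} (f : L.Functions n) (ts ts' : Fin n → L.Term 𝒳) :
      GLEqAx (gimpChain ((List.finRange n).map fun i => GLF.lit (.eq (ts i) (ts' i)))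
        (.lit (.eq (Language.Term.func f ts) (Language.Term.func f ts'))))
  | congRel {n : ℕ} (R : L.Relations n) (ts ts' : Fin n → L.Term 𝒳) :
      GLEqAx (gimpChain ((List.finRange n).map fun i => GLF.lit (.eq (ts i) (ts' i)))
        ((GLF.lit (.rel R ts)).gimp (.lit (.rel R ts'))))

end GLAx

/-! ## The Hilbert-style proof calculus for first-order game logic -/

section GLCalc

variable {L : Language} {𝒳 V A₀ : Type*} [DecidableEq 𝒳] [DecidableEq V]

/-- Provability `T ⊢_GL φ` in the `GL`-calculus (operating on `GL`-formulas, i.e.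
formulas without propositional variables), with rules `MP`, `M`, `FP*`, the game
axioms `⟨?⟩`, `⟨∪⟩`, `⟨;⟩`, `⟨*⟩`, `⟨ᵈ⟩`, the axioms `∃I`, `V`, `⟨:=⟩`, and all
propositional tautologies and equality axioms. -/
inductive GLPrv (sw : 𝒳 → 𝒳 → A₀ → A₀) (fvB : A₀ → Set 𝒳)
    (T : Set (GLF L 𝒳 (CAct L 𝒳 A₀) V)) : GLF L 𝒳 (CAct L 𝒳 A₀) V → Prop
  | hyp {φ} : φ ∈ T → GLPrv sw fvB T φ
  | taut {φ} : GLTaut φ → φ.pvars = ∅ → GLPrv sw fvB T φ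
  | eqax {φ} : GLEqAx φ → GLPrv sw fvB T φ
  | existsI {x θ φ} : φ.pvars = ∅ → GOAdm fvB x θ φ →
      GLPrv sw fvB T ((φ.osub x θ).gimp (.dia (.act (.rand x)) φ))
  | vac {x ψ} : ψ.pvars = ∅ → x ∉ ψ.ovarsF fvB →
      GLPrv sw fvB T ((GLF.dia (.act (.rand x)) ψ).gimp ψ)
  | asgn {x y : 𝒳} {θ : L.Term 𝒳} {φ} : φ.pvars = ∅ → y ≠ x → y ∉ tvars θ →
      y ∉ φ.ovarsF fvB →
      GLPrv sw fvB T ((GLF.dia (.act (.asn x θ)) φ).giff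
        (.dia (.act (.rand y)) ((GLF.lit (.eq (.var y) θ)).gand (φ.oswap sw x y))))
  | testAx {ψ φ} : ψ.pvars = ∅ → φ.pvars = ∅ →
      GLPrv sw fvB T ((GLF.dia (.test ψ) φ).giff (ψ.gand φ))
  | choiceAx {γ₁ γ₂ φ} : γ₁.pvars = ∅ → γ₂.pvars = ∅ → φ.pvars = ∅ →
      GLPrv sw fvB T ((GLF.dia (.choice γ₁ γ₂) φ).giff (.or (.dia γ₁ φ) (.dia γ₂ φ)))
  | seqAx {γ₁ γ₂ φ} : γ₁.pvars = ∅ → γ₂.pvars = ∅ → φ.pvars = ∅ →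
      GLPrv sw fvB T ((GLF.dia (.seq γ₁ γ₂) φ).giff (.dia γ₁ (.dia γ₂ φ)))
  | starAx {γ φ} : γ.pvars = ∅ → φ.pvars = ∅ →
      GLPrv sw fvB T ((GLF.dia (.star γ) φ).giff (.or φ (.dia γ (.dia (.star γ) φ))))
  | dualAx {γ φ} : γ.pvars = ∅ → φ.pvars = ∅ →
      GLPrv sw fvB T ((GLF.dia (.dual γ) φ).giff (.not (.dia γ (.not φ))))
  | mp {φ ψ} : GLPrv sw fvB T (ψ.gimp φ) → GLPrv sw fvB T ψ → GLPrv sw fvB T φ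
  | mono (γ : GLG L 𝒳 (CAct L 𝒳 A₀) V) {ψ φ} : γ.pvars = ∅ →
      GLPrv sw fvB T (ψ.gimp φ) →
      GLPrv sw fvB T ((GLF.dia γ ψ).gimp (.dia γ φ))
  | fp {γ ψ φ} : γ.pvars = ∅ →
      GLPrv sw fvB T ((GLF.or ψ (.dia γ φ)).gimp φ) →
      GLPrv sw fvB T ((GLF.dia (.star γ) ψ).gimp φ)

end GLCalc


/-! ## Auxiliary lemmas -/

section AuxBar

variable {L : Language} {𝒳 Act V : Type*} {M : Type*} [L.Structure M]

lemma bar_bar (X : V ⊕ V) : bar (bar X) = X := by cases X <;> rfl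

lemma unbar_bar (X : V ⊕ V) : unbar (bar X) = unbar X := by cases X <;> rfl

lemma eq_or_eq_bar_of_unbar_eq {X Y : V ⊕ V} (h : unbar Y = unbar X) : Y = X ∨ Y = bar X := by
  cases X <;> cases Y <;> simp [unbar, bar] at * <;> tauto

lemma barVal_bar (Ω : V → Set (𝒳 → M)) (X : V ⊕ V) : barVal Ω (bar X) = (barVal Ω X)ᶜ := by
  cases X <;> simp [barVal, bar]

variable [DecidableEq V]

lemma modif_bar (Ω : V → Set (𝒳 → M)) (X : V ⊕ V) (D : Set (𝒳 → M)) :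
    modif Ω (bar X) D = modif Ω X Dᶜ := by
  cases X <;> simp [modif, bar]

lemma barVal_modif_self (Ω : V → Set (𝒳 → M)) (X : V ⊕ V) (E : Set (𝒳 → M)) :
    barVal (modif Ω X E) X = E := by
  cases X <;> simp [barVal, modif]

lemma barVal_modif_bar (Ω : V → Set (𝒳 → M)) (X : V ⊕ V) (E : Set (𝒳 → M)) :
    barVal (modif Ω X E) (bar X) = Eᶜ := by
  cases X <;> simp [barVal, modif, bar]

lemma barVal_modif_other (Ω : V → Set (𝒳 → M)) {X Y : V ⊕ V} (h : unbar Y ≠ unbar X)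
    (E : Set (𝒳 → M)) : barVal (modif Ω X E) Y = barVal Ω Y := by
  cases X <;> cases Y <;>
    simp only [unbar, Sum.elim_inl, Sum.elim_inr, id] at h <;>
    simp [barVal, modif, Function.update_of_ne h]

lemma modif_modif_same {Ω : V → Set (𝒳 → M)} {X Z : V ⊕ V} (h : unbar Z = unbar X)
    (E D : Set (𝒳 → M)) : modif (modif Ω X E) Z D = modif Ω Z D := by
  cases X <;> cases Z <;>
    simp only [unbar, Sum.elim_inl, Sum.elim_inr, id] at h <;> subst h <;>
    simp [modif, Function.update_idem]

lemma modif_comm {Ω : V → Set (𝒳 → M)} {X Z : V ⊕ V} (h : unbar Z ≠ unbar X)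
    (E D : Set (𝒳 → M)) : modif (modif Ω X E) Z D = modif (modif Ω Z D) X E := by
  cases X <;> cases Z <;>
    simp only [unbar, Sum.elim_inl, Sum.elim_inr, id] at h <;>
    simp [modif] <;> exact Function.update_comm (Ne.symm h) _ _ _

lemma lit_neg_sem (p : Lit L 𝒳) : (p.neg).sem = (p.sem (M := M))ᶜ := by
  cases p <;> ext ω <;> simp [Lit.neg, Lit.sem]

end AuxBar

section AuxFix

variable {α : Type*} (F : Set α → Set α)

lemma lfpSet_le {Z : Set α} (h : F Z ⊆ Z) : ⋂₀ {Z | F Z ⊆ Z} ⊆ Z :=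
  Set.sInter_subset_of_mem h

lemma lfpSet_prefix (mono : ∀ ⦃A B : Set α⦄, A ⊆ B → F A ⊆ F B) :
    F (⋂₀ {Z | F Z ⊆ Z}) ⊆ ⋂₀ {Z | F Z ⊆ Z} := by
  apply Set.subset_sInter
  intro Z hZ
  exact (mono (lfpSet_le F hZ)).trans hZ

lemma lfpSet_postfix (mono : ∀ ⦃A B : Set α⦄, A ⊆ B → F A ⊆ F B) :
    ⋂₀ {Z | F Z ⊆ Z} ⊆ F (⋂₀ {Z | F Z ⊆ Z}) :=
  lfpSet_le F (mono (lfpSet_prefix F mono))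

lemma lfpSet_fixed (mono : ∀ ⦃A B : Set α⦄, A ⊆ B → F A ⊆ F B) :
    F (⋂₀ {Z | F Z ⊆ Z}) = ⋂₀ {Z | F Z ⊆ Z} :=
  (lfpSet_prefix F mono).antisymm (lfpSet_postfix F mono)

lemma gfpSet_le {Z : Set α} (h : Z ⊆ F Z) : Z ⊆ ⋃₀ {Z | Z ⊆ F Z} :=
  Set.subset_sUnion_of_mem h

lemma gfpSet_postfix (mono : ∀ ⦃A B : Set α⦄, A ⊆ B → F A ⊆ F B) :
    ⋃₀ {Z | Z ⊆ F Z} ⊆ F (⋃₀ {Z | Z ⊆ F Z}) :=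
  Set.sUnion_subset fun Z hZ => hZ.trans (mono (gfpSet_le F hZ))

lemma gfpSet_prefix (mono : ∀ ⦃A B : Set α⦄, A ⊆ B → F A ⊆ F B) :
    F (⋃₀ {Z | Z ⊆ F Z}) ⊆ ⋃₀ {Z | Z ⊆ F Z} :=
  gfpSet_le F (mono (gfpSet_postfix F mono))

lemma sUnion_compl_fix : ⋃₀ {D | D ⊆ (F Dᶜ)ᶜ} = (⋂₀ {D | F D ⊆ D})ᶜ := by
  ext ω
  constructor
  · rintro ⟨D, hD, hω⟩
    simp only [Set.mem_compl_iff, Set.mem_sInter, Set.mem_setOf_eq]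
    push_neg
    exact ⟨Dᶜ, Set.subset_compl_comm.mp hD, fun h => h hω⟩
  · intro h
    simp only [Set.mem_compl_iff, Set.mem_sInter, Set.mem_setOf_eq] at h
    push_neg at h
    obtain ⟨E, hE, hω⟩ := h
    refine ⟨Eᶜ, ?_, hω⟩
    show Eᶜ ⊆ (F Eᶜᶜ)ᶜ
    rw [compl_compl]
    exact Set.compl_subset_compl.mpr hE

lemma sInter_compl_fix : ⋂₀ {D | (F Dᶜ)ᶜ ⊆ D} = (⋃₀ {D | D ⊆ F D})ᶜ := by
  ext ω
  constructor
  · intro h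
    simp only [Set.mem_sInter, Set.mem_setOf_eq] at h
    rintro ⟨D, hD, hω⟩
    have h2 : (F Dᶜᶜ)ᶜ ⊆ Dᶜ := by
      rw [compl_compl]
      exact Set.compl_subset_compl.mpr hD
    exact h Dᶜ h2 hω
  · intro h D hD
    by_contra hω
    refine h ⟨Dᶜ, ?_, hω⟩
    exact Set.compl_subset_comm.mp hD

end AuxFix
section AuxCompl

variable {L : Language} {𝒳 Act V : Type*} {M : Type*} [L.Structure M] [DecidableEq V]

theorem compl_sem (tr : Act → (𝒳 → M) → (𝒳 → M) → Prop) :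
    ∀ (φ : MuF L 𝒳 Act V) (Ω : V → Set (𝒳 → M)),
      (φ.compl).sem tr Ω = (φ.sem tr Ω)ᶜ
  | .lit p, Ω => by simp [MuF.compl, MuF.sem, lit_neg_sem]
  | .var X, Ω => by simp [MuF.compl, MuF.sem, barVal_bar]
  | .or φ ψ, Ω => by
      simp [MuF.compl, MuF.sem, compl_sem tr φ, compl_sem tr ψ, Set.compl_union]
  | .and φ ψ, Ω => by
      simp [MuF.compl, MuF.sem, compl_sem tr φ, compl_sem tr ψ, Set.compl_inter]
  | .dia a φ, Ω => by
      ext ω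
      simp only [MuF.compl, MuF.sem, compl_sem tr φ, Set.mem_setOf_eq, Set.mem_compl_iff]
      push_neg
      rfl
  | .box a φ, Ω => by
      ext ω
      simp only [MuF.compl, MuF.sem, compl_sem tr φ, Set.mem_setOf_eq, Set.mem_compl_iff]
      push_neg
      simp only [Set.mem_compl_iff, not_not]
  | .mu X φ, Ω => by
      simp only [MuF.compl, MuF.sem]
      have hset : {D | D ⊆ (φ.compl).sem tr (modif Ω (bar X) D)} =
          {D | D ⊆ (φ.sem tr (modif Ω X Dᶜ))ᶜ} := by
        ext D
        rw [Set.mem_setOf_eq, Set.mem_setOf_eq, modif_bar, compl_sem tr φ]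
      rw [hset]
      exact sUnion_compl_fix (fun E => φ.sem tr (modif Ω X E))
  | .nu X φ, Ω => by
      simp only [MuF.compl, MuF.sem]
      have hset : {D | (φ.compl).sem tr (modif Ω (bar X) D) ⊆ D} =
          {D | (φ.sem tr (modif Ω X Dᶜ))ᶜ ⊆ D} := by
        ext D
        rw [Set.mem_setOf_eq, Set.mem_setOf_eq, modif_bar, compl_sem tr φ]
      rw [hset]
      exact sInter_compl_fix (fun E => φ.sem tr (modif Ω X E))

end AuxCompl

section AuxGL

variable {L : Language} {𝒳 Act V : Type*} {M : Type*} [L.Structure M]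
variable (tr : Act → (𝒳 → M) → (𝒳 → M) → Prop)

theorem glg_sem_mono : ∀ (γ : GLG L 𝒳 Act V) (Ω : V → Set (𝒳 → M)) ⦃D D' : Set (𝒳 → M)⦄,
    D ⊆ D' → γ.sem tr Ω D ⊆ γ.sem tr Ω D'
  | .act a, Ω, D, D', h => by
      simp only [GLG.sem]
      rintro ω ⟨ν, h1, h2⟩
      exact ⟨ν, h1, h h2⟩
  | .test φ, Ω, D, D', h => by
      simp only [GLG.sem]
      exact Set.inter_subset_inter_right _ h
  | .choice γ₁ γ₂, Ω, D, D', h => by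
      simp only [GLG.sem]
      exact Set.union_subset_union (glg_sem_mono γ₁ Ω h) (glg_sem_mono γ₂ Ω h)
  | .seq γ₁ γ₂, Ω, D, D', h => by
      simp only [GLG.sem]
      exact glg_sem_mono γ₁ Ω (glg_sem_mono γ₂ Ω h)
  | .star γ, Ω, D, D', h => by
      simp only [GLG.sem]
      apply Set.sInter_subset_sInter
      intro Z hZ
      rw [Set.mem_setOf_eq] at *
      exact (Set.union_subset_union_left _ h).trans hZ
  | .dual γ, Ω, D, D', h => by
      simp only [GLG.sem]
      exact Set.compl_subset_compl.mpr (glg_sem_mono γ Ω (Set.compl_subset_compl.mpr h))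

mutual

theorem glf_sem_congr : ∀ (φ : GLF L 𝒳 Act V) (Ω Ω' : V → Set (𝒳 → M)),
    (∀ X ∈ φ.pvars, Ω X = Ω' X) → φ.sem tr Ω = φ.sem tr Ω'
  | .lit p, Ω, Ω', _ => by simp only [GLF.sem]
  | .var X, Ω, Ω', h => by
      simp only [GLF.sem]
      exact h X (by simp [GLF.pvars])
  | .not φ, Ω, Ω', h => by
      simp only [GLF.sem]
      rw [glf_sem_congr φ Ω Ω' h]
  | .or φ ψ, Ω, Ω', h => by
      simp only [GLF.sem]
      rw [glf_sem_congr φ Ω Ω' (fun X hX => h X (Set.mem_union_left _ hX)),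
        glf_sem_congr ψ Ω Ω' (fun X hX => h X (Set.mem_union_right _ hX))]
  | .dia γ φ, Ω, Ω', h => by
      simp only [GLF.sem]
      rw [glf_sem_congr φ Ω Ω' (fun X hX => h X (Set.mem_union_right _ hX)),
        glg_sem_congr γ Ω Ω' (fun X hX => h X (Set.mem_union_left _ hX))]

theorem glg_sem_congr : ∀ (γ : GLG L 𝒳 Act V) (Ω Ω' : V → Set (𝒳 → M)),
    (∀ X ∈ γ.pvars, Ω X = Ω' X) → ∀ D, γ.sem tr Ω D = γ.sem tr Ω' D
  | .act a, Ω, Ω', _, D => by simp only [GLG.sem]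
  | .test φ, Ω, Ω', h, D => by
      simp only [GLG.sem]
      rw [glf_sem_congr φ Ω Ω' h]
  | .choice γ₁ γ₂, Ω, Ω', h, D => by
      simp only [GLG.sem]
      rw [glg_sem_congr γ₁ Ω Ω' (fun X hX => h X (Set.mem_union_left _ hX)),
        glg_sem_congr γ₂ Ω Ω' (fun X hX => h X (Set.mem_union_right _ hX))]
  | .seq γ₁ γ₂, Ω, Ω', h, D => by
      simp only [GLG.sem]
      rw [glg_sem_congr γ₁ Ω Ω' (fun X hX => h X (Set.mem_union_left _ hX)),
        glg_sem_congr γ₂ Ω Ω' (fun X hX => h X (Set.mem_union_right _ hX))]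
  | .star γ, Ω, Ω', h, D => by
      simp only [GLG.sem]
      have hset : {Z | D ∪ γ.sem tr Ω Z ⊆ Z} = {Z | D ∪ γ.sem tr Ω' Z ⊆ Z} := by
        ext Z
        simp only [Set.mem_setOf_eq, glg_sem_congr γ Ω Ω' h Z]
      rw [hset]
  | .dual γ, Ω, Ω', h, D => by
      simp only [GLG.sem]
      rw [glg_sem_congr γ Ω Ω' h]

end

theorem sharp_sem {φ : GLF L 𝒳 Act V} {m : MuF L 𝒳 Act V} [DecidableEq V] (h : Sharp φ m) :
    ∀ Ω : V → Set (𝒳 → M), φ.sem tr Ω = m.sem tr Ω := by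
  induction h with
  | lit p => intro Ω; simp [GLF.sem, MuF.sem]
  | var X => intro Ω; simp [GLF.sem, MuF.sem, barVal]
  | not h ih =>
      intro Ω
      simp only [GLF.sem, compl_sem, ih Ω]
  | or h₁ h₂ ih₁ ih₂ =>
      intro Ω
      simp only [GLF.sem, MuF.sem, ih₁ Ω, ih₂ Ω]
  | act h ih =>
      intro Ω
      simp only [GLF.sem, GLG.sem, MuF.sem, ih Ω]
  | test h₁ h₂ ih₁ ih₂ =>
      intro Ω
      simp only [GLF.sem, GLG.sem, MuF.sem, ih₁ Ω, ih₂ Ω]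
  | choice h₁ h₂ ih₁ ih₂ =>
      intro Ω
      simp only [GLF.sem, GLG.sem, MuF.sem] at *
      rw [← ih₁ Ω, ← ih₂ Ω]
  | seq h ih =>
      intro Ω
      simp only [GLF.sem, GLG.sem] at *
      rw [← ih Ω]
  | dual h ih =>
      intro Ω
      have hm := (ih Ω).symm
      simp only [GLF.sem, GLG.sem] at hm
      simp only [GLF.sem, GLG.sem, compl_sem, hm]
  | @star γ φ X m hX hγ h ih =>
      intro Ω
      simp only [GLF.sem, GLG.sem, MuF.sem]
      have hset : {Z | GLF.sem tr φ Ω ∪ GLG.sem tr γ Ω Z ⊆ Z}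
          = {D | MuF.sem tr m (modif Ω (Sum.inl X) D) ⊆ D} := by
        ext Z
        have hm := (ih (Function.update Ω X Z)).symm
        simp only [GLF.sem, GLG.sem, MuF.sem] at hm
        have hmod : modif Ω (Sum.inl X) Z = Function.update Ω X Z := rfl
        rw [Set.mem_setOf_eq, Set.mem_setOf_eq, hmod, hm, Function.update_self,
          glf_sem_congr tr φ (Function.update Ω X Z) Ω
            (fun Y hY => Function.update_of_ne (fun hYX => hX (by rwa [hYX] at hY)) _ _),
          glg_sem_congr tr γ (Function.update Ω X Z) Ω
            (fun Y hY => Function.update_of_ne (fun hYX => hγ (by rwa [hYX] at hY)) _ _) Z]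
      rw [hset]

end AuxGL

section AuxMu

variable {L : Language} {𝒳 Act V : Type*} {M : Type*} [L.Structure M] [DecidableEq V]
variable (tr : Act → (𝒳 → M) → (𝒳 → M) → Prop)

theorem muf_sem_mono : ∀ (φ : MuF L 𝒳 Act V) (X : V ⊕ V), bar X ∉ φ.mentions →
    ∀ (Ω : V → Set (𝒳 → M)) ⦃E E' : Set (𝒳 → M)⦄, E ⊆ E' →
      φ.sem tr (modif Ω X E) ⊆ φ.sem tr (modif Ω X E')
  | .lit p, X, hm, Ω, E, E', h => by simp [MuF.sem]
  | .var Y, X, hm, Ω, E, E', h => by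
      simp only [MuF.sem]
      by_cases hYX : Y = X
      · subst hYX
        rw [barVal_modif_self, barVal_modif_self]
        exact h
      · have hun : unbar Y ≠ unbar X := by
          intro he
          rcases eq_or_eq_bar_of_unbar_eq he with h1 | h1
          · exact hYX h1
          · exact hm (by simp [MuF.mentions, h1])
        rw [barVal_modif_other _ hun, barVal_modif_other _ hun]
  | .or φ ψ, X, hm, Ω, E, E', h => by
      simp only [MuF.sem]
      exact Set.union_subset_union
        (muf_sem_mono φ X (fun hh => hm (Set.mem_union_left _ hh)) Ω h)
        (muf_sem_mono ψ X (fun hh => hm (Set.mem_union_right _ hh)) Ω h)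
  | .and φ ψ, X, hm, Ω, E, E', h => by
      simp only [MuF.sem]
      exact Set.inter_subset_inter
        (muf_sem_mono φ X (fun hh => hm (Set.mem_union_left _ hh)) Ω h)
        (muf_sem_mono ψ X (fun hh => hm (Set.mem_union_right _ hh)) Ω h)
  | .dia a φ, X, hm, Ω, E, E', h => by
      simp only [MuF.sem]
      rintro ω ⟨ν, h1, h2⟩
      exact ⟨ν, h1, muf_sem_mono φ X hm Ω h h2⟩
  | .box a φ, X, hm, Ω, E, E', h => by
      simp only [MuF.sem]
      intro ω hω ν hν
      exact muf_sem_mono φ X hm Ω h (hω ν hν)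
  | .mu Z φ, X, hm, Ω, E, E', h => by
      simp only [MuF.sem]
      have hmφ : bar X ∉ φ.mentions := fun hh => hm (Set.mem_union_right _ hh)
      by_cases hu : unbar Z = unbar X
      · have hset : {D | φ.sem tr (modif (modif Ω X E) Z D) ⊆ D}
            = {D | φ.sem tr (modif (modif Ω X E') Z D) ⊆ D} := by
          ext D
          simp only [Set.mem_setOf_eq, modif_modif_same hu]
        rw [hset]
      · apply Set.sInter_subset_sInter
        intro D hD
        rw [Set.mem_setOf_eq] at *
        rw [modif_comm hu] at hD ⊢
        exact (muf_sem_mono φ X hmφ (modif Ω Z D) h).trans hD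
  | .nu Z φ, X, hm, Ω, E, E', h => by
      simp only [MuF.sem]
      have hmφ : bar X ∉ φ.mentions := fun hh => hm (Set.mem_union_right _ hh)
      by_cases hu : unbar Z = unbar X
      · have hset : {D | D ⊆ φ.sem tr (modif (modif Ω X E) Z D)}
            = {D | D ⊆ φ.sem tr (modif (modif Ω X E') Z D)} := by
          ext D
          simp only [Set.mem_setOf_eq, modif_modif_same hu]
        rw [hset]
      · apply Set.sUnion_subset_sUnion
        intro D hD
        rw [Set.mem_setOf_eq] at *
        rw [modif_comm hu] at hD ⊢
        exact hD.trans (muf_sem_mono φ X hmφ (modif Ω Z D) h)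

variable [DecidableEq 𝒳]

/-- A set of states is independent of the object variable `ℓ`. -/
def StIndep (ℓ : 𝒳) (S : Set (𝒳 → M)) : Prop :=
  ∀ (b : M) (ω : 𝒳 → M), ω ∈ S ↔ Function.update ω ℓ b ∈ S

lemma StIndep.compl {ℓ : 𝒳} {S : Set (𝒳 → M)} (h : StIndep ℓ S) : StIndep ℓ Sᶜ :=
  fun b ω => not_congr (h b ω)

lemma StIndep.union {ℓ : 𝒳} {S T : Set (𝒳 → M)} (hS : StIndep ℓ S) (hT : StIndep ℓ T) :
    StIndep ℓ (S ∪ T) := fun b ω => or_congr (hS b ω) (hT b ω)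

lemma StIndep.inter {ℓ : 𝒳} {S T : Set (𝒳 → M)} (hS : StIndep ℓ S) (hT : StIndep ℓ T) :
    StIndep ℓ (S ∩ T) := fun b ω => and_congr (hS b ω) (hT b ω)

lemma realize_update_of_not_mem_tvars {ℓ : 𝒳} {b : M} :
    ∀ {t : L.Term 𝒳}, ℓ ∉ tvars t → ∀ ω : 𝒳 → M,
      t.realize (Function.update ω ℓ b) = t.realize ω
  | .var y, h, ω => by
      have : ℓ ≠ y := by simpa [tvars] using h
      simp [Language.Term.realize_var, Function.update_of_ne (Ne.symm this)]
  | .func f ts, h, ω => by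
      simp only [Language.Term.realize_func]
      congr 1
      funext i
      exact realize_update_of_not_mem_tvars
        (fun hh => h (by simp only [tvars]; exact Set.mem_iUnion.mpr ⟨i, hh⟩)) ω

lemma lit_sem_indep {ℓ : 𝒳} {p : Lit L 𝒳} (h : ℓ ∉ p.ovars) : StIndep ℓ (p.sem (M := M)) := by
  cases p with
  | eq t₁ t₂ =>
      intro b ω
      simp only [Lit.ovars, Set.mem_union, not_or] at h
      simp [Lit.sem, realize_update_of_not_mem_tvars h.1,
        realize_update_of_not_mem_tvars h.2]
  | ne t₁ t₂ =>
      intro b ω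
      simp only [Lit.ovars, Set.mem_union, not_or] at h
      simp [Lit.sem, realize_update_of_not_mem_tvars h.1,
        realize_update_of_not_mem_tvars h.2]
  | rel R ts =>
      intro b ω
      simp only [Lit.ovars] at h
      have hts : ∀ i, ℓ ∉ tvars (ts i) := fun i hi => h (Set.mem_iUnion.mpr ⟨i, hi⟩)
      have harg : (fun i => (ts i).realize (Function.update ω ℓ b))
          = fun i => (ts i).realize ω :=
        funext fun i => realize_update_of_not_mem_tvars (hts i) ω
      simp only [Lit.sem, Set.mem_setOf_eq, harg]
  | nrel R ts =>
      intro b ω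
      simp only [Lit.ovars] at h
      have hts : ∀ i, ℓ ∉ tvars (ts i) := fun i hi => h (Set.mem_iUnion.mpr ⟨i, hi⟩)
      have harg : (fun i => (ts i).realize (Function.update ω ℓ b))
          = fun i => (ts i).realize ω :=
        funext fun i => realize_update_of_not_mem_tvars (hts i) ω
      simp only [Lit.sem, Set.mem_setOf_eq, harg]

theorem muf_sem_indep (ℓ : 𝒳) : ∀ (φ : MuF L 𝒳 Act V), φ.WF → ℓ ∉ φ.ovars →
    (∀ a ∈ φ.acts, IndepAct tr ℓ a) →
    ∀ (Ω : V → Set (𝒳 → M)), (∀ Y ∈ φ.freeVars, StIndep ℓ (barVal Ω Y)) →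
      StIndep ℓ (φ.sem tr Ω) := by
  intro φ
  induction φ with
  | lit p =>
      intro _ hov _ Ω _
      exact lit_sem_indep hov
  | var X =>
      intro _ _ _ Ω h
      exact h X rfl
  | or φ ψ ihφ ihψ =>
      intro hwf hov hacts Ω h
      exact StIndep.union
        (ihφ hwf.1 (fun hh => hov (Set.mem_union_left _ hh))
          (fun a ha => hacts a (Set.mem_union_left _ ha)) Ω
          (fun Y hY => h Y (Set.mem_union_left _ hY)))
        (ihψ hwf.2 (fun hh => hov (Set.mem_union_right _ hh))
          (fun a ha => hacts a (Set.mem_union_right _ ha)) Ω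
          (fun Y hY => h Y (Set.mem_union_right _ hY)))
  | and φ ψ ihφ ihψ =>
      intro hwf hov hacts Ω h
      exact StIndep.inter
        (ihφ hwf.1 (fun hh => hov (Set.mem_union_left _ hh))
          (fun a ha => hacts a (Set.mem_union_left _ ha)) Ω
          (fun Y hY => h Y (Set.mem_union_left _ hY)))
        (ihψ hwf.2 (fun hh => hov (Set.mem_union_right _ hh))
          (fun a ha => hacts a (Set.mem_union_right _ ha)) Ω
          (fun Y hY => h Y (Set.mem_union_right _ hY)))
  | dia a φ ih =>
      intro hwf hov hacts Ω h
      have hind := ih hwf hov (fun a' ha' => hacts a' (Set.mem_union_right _ ha')) Ω h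
      have ha : IndepAct tr ℓ a := hacts a (Set.mem_union_left _ rfl)
      intro b ω
      simp only [MuF.sem, Set.mem_setOf_eq]
      constructor
      · rintro ⟨ν, h1, h2⟩
        exact ⟨Function.update ν ℓ b, ha b ω ν h1, (hind b ν).mp h2⟩
      · rintro ⟨ν, h1, h2⟩
        have h3 := ha (ω ℓ) _ _ h1
        rw [Function.update_idem, Function.update_eq_self] at h3
        exact ⟨Function.update ν ℓ (ω ℓ), h3, (hind (ω ℓ) ν).mp h2⟩
  | box a φ ih =>
      intro hwf hov hacts Ω h
      have hind := ih hwf hov (fun a' ha' => hacts a' (Set.mem_union_right _ ha')) Ω h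
      have ha : IndepAct tr ℓ a := hacts a (Set.mem_union_left _ rfl)
      intro b ω
      simp only [MuF.sem, Set.mem_setOf_eq]
      constructor
      · intro hh ν hν
        have h3 := ha (ω ℓ) _ _ hν
        rw [Function.update_idem, Function.update_eq_self] at h3
        have h4 := hh _ h3
        have h5 := (hind (ν ℓ) (Function.update ν ℓ (ω ℓ))).mp h4
        rwa [Function.update_idem, Function.update_eq_self] at h5
      · intro hh ν hν
        have h4 := hh _ (ha b _ _ hν)
        exact (hind b ν).mpr h4
  | mu X φ ih =>
      intro hwf hov hacts Ω h
      have hbar : bar X ∉ φ.mentions := hwf.1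
      have mono : ∀ ⦃E E' : Set (𝒳 → M)⦄, E ⊆ E' →
          φ.sem tr (modif Ω X E) ⊆ φ.sem tr (modif Ω X E') :=
        fun E E' hh => muf_sem_mono tr φ X hbar Ω hh
      have hE₂ind : StIndep ℓ {ω : 𝒳 → M | ∀ b : M,
          Function.update ω ℓ b ∈ (MuF.mu X φ).sem tr Ω} := by
        intro b ω
        simp only [Set.mem_setOf_eq]
        constructor
        · intro hh b'
          rw [Function.update_idem]
          exact hh b'
        · intro hh b'
          have := hh b'
          rwa [Function.update_idem] at this
      have hE₂S : {ω : 𝒳 → M | ∀ b : M, Function.update ω ℓ b ∈ (MuF.mu X φ).sem tr Ω}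
          ⊆ (MuF.mu X φ).sem tr Ω := by
        intro ω hh
        have := hh (ω ℓ)
        rwa [Function.update_eq_self] at this
      have hF'ind : StIndep ℓ (φ.sem tr (modif Ω X
          {ω : 𝒳 → M | ∀ b : M, Function.update ω ℓ b ∈ (MuF.mu X φ).sem tr Ω})) := by
        apply ih hwf.2 hov hacts
        intro Y hY
        by_cases hYX : Y = X
        · subst hYX; rw [barVal_modif_self]; exact hE₂ind
        · by_cases hYb : Y = bar X
          · subst hYb; rw [barVal_modif_bar]; exact hE₂ind.compl
          · have hun : unbar Y ≠ unbar X := by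
              intro he
              rcases eq_or_eq_bar_of_unbar_eq he with h1 | h1
              · exact hYX h1
              · exact hYb h1
            rw [barVal_modif_other _ hun]
            exact h Y ⟨hY, by simp [hYX, hYb]⟩
      have hpre : φ.sem tr (modif Ω X
          {ω : 𝒳 → M | ∀ b : M, Function.update ω ℓ b ∈ (MuF.mu X φ).sem tr Ω})
          ⊆ {ω : 𝒳 → M | ∀ b : M, Function.update ω ℓ b ∈ (MuF.mu X φ).sem tr Ω} := by
        intro ω hω b
        have h1 := (hF'ind b ω).mp hω
        have h2 : φ.sem tr (modif Ω X ((MuF.mu X φ).sem tr Ω)) ⊆ (MuF.mu X φ).sem tr Ω := by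
          show φ.sem tr (modif Ω X (⋂₀ {E | φ.sem tr (modif Ω X E) ⊆ E})) ⊆ _
          exact lfpSet_prefix (fun E => φ.sem tr (modif Ω X E)) mono
        exact h2 (mono hE₂S h1)
      have hSE₂ : (MuF.mu X φ).sem tr Ω ⊆
          {ω : 𝒳 → M | ∀ b : M, Function.update ω ℓ b ∈ (MuF.mu X φ).sem tr Ω} :=
        lfpSet_le (fun E => φ.sem tr (modif Ω X E)) hpre
      have heq := hSE₂.antisymm hE₂S
      rw [heq]
      exact hE₂ind
  | nu X φ ih =>
      intro hwf hov hacts Ω h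
      have hbar : bar X ∉ φ.mentions := hwf.1
      have mono : ∀ ⦃E E' : Set (𝒳 → M)⦄, E ⊆ E' →
          φ.sem tr (modif Ω X E) ⊆ φ.sem tr (modif Ω X E') :=
        fun E E' hh => muf_sem_mono tr φ X hbar Ω hh
      have hE₂ind : StIndep ℓ {ω : 𝒳 → M | ∃ b : M,
          Function.update ω ℓ b ∈ (MuF.nu X φ).sem tr Ω} := by
        intro b ω
        simp only [Set.mem_setOf_eq]
        constructor
        · rintro ⟨b', hb'⟩
          exact ⟨b', by rwa [Function.update_idem]⟩
        · rintro ⟨b', hb'⟩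
          rw [Function.update_idem] at hb'
          exact ⟨b', hb'⟩
      have hSE₂ : (MuF.nu X φ).sem tr Ω ⊆
          {ω : 𝒳 → M | ∃ b : M, Function.update ω ℓ b ∈ (MuF.nu X φ).sem tr Ω} := by
        intro ω hh
        exact ⟨ω ℓ, by rwa [Function.update_eq_self]⟩
      have hF'ind : StIndep ℓ (φ.sem tr (modif Ω X
          {ω : 𝒳 → M | ∃ b : M, Function.update ω ℓ b ∈ (MuF.nu X φ).sem tr Ω})) := by
        apply ih hwf.2 hov hacts
        intro Y hY
        by_cases hYX : Y = X
        · subst hYX; rw [barVal_modif_self]; exact hE₂ind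
        · by_cases hYb : Y = bar X
          · subst hYb; rw [barVal_modif_bar]; exact hE₂ind.compl
          · have hun : unbar Y ≠ unbar X := by
              intro he
              rcases eq_or_eq_bar_of_unbar_eq he with h1 | h1
              · exact hYX h1
              · exact hYb h1
            rw [barVal_modif_other _ hun]
            exact h Y ⟨hY, by simp [hYX, hYb]⟩
      have hpost : {ω : 𝒳 → M | ∃ b : M, Function.update ω ℓ b ∈ (MuF.nu X φ).sem tr Ω}
          ⊆ φ.sem tr (modif Ω X
            {ω : 𝒳 → M | ∃ b : M, Function.update ω ℓ b ∈ (MuF.nu X φ).sem tr Ω}) := by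
        rintro ω ⟨b, hb⟩
        have h2 : (MuF.nu X φ).sem tr Ω ⊆ φ.sem tr (modif Ω X ((MuF.nu X φ).sem tr Ω)) := by
          show (⋃₀ {E | E ⊆ φ.sem tr (modif Ω X E)}) ⊆ _
          exact gfpSet_postfix (fun E => φ.sem tr (modif Ω X E)) mono
        have h3 := mono hSE₂ (h2 hb)
        have h4 := (hF'ind (ω ℓ) (Function.update ω ℓ b)).mp h3
        rwa [Function.update_idem, Function.update_eq_self] at h4
      have hE₂S : {ω : 𝒳 → M | ∃ b : M, Function.update ω ℓ b ∈ (MuF.nu X φ).sem tr Ω}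
          ⊆ (MuF.nu X φ).sem tr Ω :=
        gfpSet_le (fun E => φ.sem tr (modif Ω X E)) hpost
      have heq := hSE₂.antisymm hE₂S
      rw [heq]
      exact hE₂ind

end AuxMu
section AuxList

variable {L : Language} {𝒳 Act V : Type*}

lemma mem_boundList_of_mem_boundVars :
    ∀ (φ : MuF L 𝒳 Act V) {X : V ⊕ V}, X ∈ φ.boundVars → X ∈ φ.boundList
  | .lit _, X, h => absurd h (by simp [MuF.boundVars])
  | .var _, X, h => absurd h (by simp [MuF.boundVars])
  | .or φ ψ, X, h => by
      simp only [MuF.boundVars, Set.mem_union] at h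
      simp only [MuF.boundList, List.mem_append]
      exact h.imp (mem_boundList_of_mem_boundVars φ) (mem_boundList_of_mem_boundVars ψ)
  | .and φ ψ, X, h => by
      simp only [MuF.boundVars, Set.mem_union] at h
      simp only [MuF.boundList, List.mem_append]
      exact h.imp (mem_boundList_of_mem_boundVars φ) (mem_boundList_of_mem_boundVars ψ)
  | .dia _ φ, X, h => mem_boundList_of_mem_boundVars φ h
  | .box _ φ, X, h => mem_boundList_of_mem_boundVars φ h
  | .mu Z φ, X, h => by
      simp only [MuF.boundVars, Set.mem_union, Set.mem_singleton_iff] at h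
      simp only [MuF.boundList, List.mem_cons]
      exact h.imp id (mem_boundList_of_mem_boundVars φ)
  | .nu Z φ, X, h => by
      simp only [MuF.boundVars, Set.mem_union, Set.mem_singleton_iff] at h
      simp only [MuF.boundList, List.mem_cons]
      exact h.imp id (mem_boundList_of_mem_boundVars φ)

lemma freeVars_subset_mentions : ∀ (φ : MuF L 𝒳 Act V), φ.freeVars ⊆ φ.mentions
  | .lit _ => subset_rfl
  | .var _ => subset_rfl
  | .or φ ψ => Set.union_subset_union (freeVars_subset_mentions φ) (freeVars_subset_mentions ψ)
  | .and φ ψ => Set.union_subset_union (freeVars_subset_mentions φ) (freeVars_subset_mentions ψ)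
  | .dia _ φ => freeVars_subset_mentions φ
  | .box _ φ => freeVars_subset_mentions φ
  | .mu X φ =>
      Set.diff_subset.trans ((freeVars_subset_mentions φ).trans Set.subset_union_right)
  | .nu X φ =>
      Set.diff_subset.trans ((freeVars_subset_mentions φ).trans Set.subset_union_right)

end AuxList

section AuxTr

variable {L : Language} {𝒳 Act V : Type*} {M : Type*} [L.Structure M]
  [DecidableEq 𝒳] [DecidableEq V]
variable (tr : Act → (𝒳 → M) → (𝒳 → M) → Prop)

lemma glg_sem_seq (γ₁ γ₂ : GLG L 𝒳 Act V) (Ω : V → Set (𝒳 → M)) (D) :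
    (GLG.seq γ₁ γ₂).sem tr Ω D = γ₁.sem tr Ω (γ₂.sem tr Ω D) := by rw [GLG.sem]

lemma glg_sem_choice (γ₁ γ₂ : GLG L 𝒳 Act V) (Ω : V → Set (𝒳 → M)) (D) :
    (GLG.choice γ₁ γ₂).sem tr Ω D = γ₁.sem tr Ω D ∪ γ₂.sem tr Ω D := by rw [GLG.sem]

lemma glg_sem_dual (γ : GLG L 𝒳 Act V) (Ω : V → Set (𝒳 → M)) (D) :
    (GLG.dual γ).sem tr Ω D = (γ.sem tr Ω Dᶜ)ᶜ := by rw [GLG.sem]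

lemma glg_sem_star (γ : GLG L 𝒳 Act V) (Ω : V → Set (𝒳 → M)) (D) :
    (GLG.star γ).sem tr Ω D = ⋂₀ {Z | D ∪ γ.sem tr Ω Z ⊆ Z} := by rw [GLG.sem]

lemma glg_sem_test (φ : GLF L 𝒳 Act V) (Ω : V → Set (𝒳 → M)) (D) :
    (GLG.test φ).sem tr Ω D = φ.sem tr Ω ∩ D := by rw [GLG.sem]

lemma glg_sem_act (a : Act) (Ω : V → Set (𝒳 → M)) (D) :
    (GLG.act a : GLG L 𝒳 Act V).sem tr Ω D = {ω | ∃ ν, tr a ω ν ∧ ν ∈ D} := by rw [GLG.sem]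

lemma act_asn_sem (asn : 𝒳 → L.Term 𝒳 → Act)
    (hasn : ∀ (x : 𝒳) (θ : L.Term 𝒳) (ω ν : 𝒳 → M),
      tr (asn x θ) ω ν ↔ ν = Function.update ω x (θ.realize ω))
    (ℓ : 𝒳) (k : L.Constants) (Ωg : V → Set (𝒳 → M)) (S : Set (𝒳 → M)) :
    (GLG.act (asn ℓ (Language.Constants.term k)) : GLG L 𝒳 Act V).sem tr Ωg S
      = {ω | Function.update ω ℓ (Language.constantMap k) ∈ S} := by
  ext ω
  rw [glg_sem_act]
  simp only [Set.mem_setOf_eq]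
  constructor
  · rintro ⟨ν, h1, h2⟩
    rw [hasn] at h1
    subst h1
    rwa [Language.Term.realize_constants] at h2
  · intro h
    refine ⟨_, (hasn _ _ _ _).mpr rfl, ?_⟩
    rwa [Language.Term.realize_constants]

lemma test_eq_sem (ℓ : 𝒳) (k : L.Constants) (Ωg : V → Set (𝒳 → M)) (S : Set (𝒳 → M)) :
    (GLG.test (GLF.lit (.eq (.var ℓ) (Language.Constants.term k))) : GLG L 𝒳 Act V).sem tr Ωg S
      = {ω | ω ℓ = Language.constantMap k} ∩ S := by
  rw [glg_sem_test]
  congr 1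
  ext ω
  simp only [GLF.sem, Lit.sem, Set.mem_setOf_eq, Language.Term.realize_var,
    Language.Term.realize_constants]

lemma test_ne_sem (ℓ : 𝒳) (k : L.Constants) (Ωg : V → Set (𝒳 → M)) (S : Set (𝒳 → M)) :
    (GLG.test (GLF.lit (.ne (.var ℓ) (Language.Constants.term k))) : GLG L 𝒳 Act V).sem tr Ωg S
      = {ω | ω ℓ = Language.constantMap k}ᶜ ∩ S := by
  rw [glg_sem_test]
  congr 1
  ext ω
  simp only [GLF.sem, Lit.sem, Set.mem_setOf_eq, Language.Term.realize_var,
    Language.Term.realize_constants, Set.mem_compl_iff]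

lemma glFalse_sem (ℓ : 𝒳) (Ωg : V → Set (𝒳 → M)) :
    (glFalse ℓ : GLF L 𝒳 Act V).sem tr Ωg = ∅ := by
  ext ω
  simp [glFalse, GLF.sem, Lit.sem]

lemma glTrue_sem (ℓ : 𝒳) (Ωg : V → Set (𝒳 → M)) :
    (glTrue ℓ : GLF L 𝒳 Act V).sem tr Ωg = Set.univ := by
  ext ω
  simp [glTrue, GLF.sem, Lit.sem]

end AuxTr
section MainTr

variable {L : Language} {𝒳 Act V : Type*} {M : Type*} [L.Structure M]
  [DecidableEq 𝒳] [DecidableEq V]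
variable (tr : Act → (𝒳 → M) → (𝒳 → M) → Prop)

lemma mu_game_sem (asn : 𝒳 → L.Term 𝒳 → Act)
    (hasn : ∀ (x : 𝒳) (θ : L.Term 𝒳) (ω ν : 𝒳 → M),
      tr (asn x θ) ω ν ↔ ν = Function.update ω x (θ.realize ω))
    (ℓ : 𝒳) (k : L.Constants) (g : GLG L 𝒳 Act V) (Ωg : V → Set (𝒳 → M)) (D : Set (𝒳 → M)) :
    (GLG.seq (.act (asn ℓ (Language.Constants.term k)))
      (.seq (.star (.seq (.test (.lit (.eq (.var ℓ) (Language.Constants.term k)))) g))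
            (.test (.lit (.ne (.var ℓ) (Language.Constants.term k)))))).sem tr Ωg D
    = {ω | Function.update ω ℓ (Language.constantMap k) ∈
        ⋂₀ {Z | ({ω : 𝒳 → M | ω ℓ = Language.constantMap k}ᶜ ∩ D)
          ∪ ({ω : 𝒳 → M | ω ℓ = Language.constantMap k} ∩ g.sem tr Ωg Z) ⊆ Z}} := by
  rw [glg_sem_seq, glg_sem_seq, test_ne_sem, glg_sem_star, act_asn_sem tr asn hasn]
  have hbody : ∀ Z : Set (𝒳 → M),
      (GLG.seq (GLG.test (GLF.lit (.eq (.var ℓ) (Language.Constants.term k)))) g).sem tr Ωg Z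
        = {ω : 𝒳 → M | ω ℓ = Language.constantMap k} ∩ g.sem tr Ωg Z := by
    intro Z
    rw [glg_sem_seq, test_eq_sem]
  simp only [hbody]

lemma nu_game_sem (asn : 𝒳 → L.Term 𝒳 → Act)
    (hasn : ∀ (x : 𝒳) (θ : L.Term 𝒳) (ω ν : 𝒳 → M),
      tr (asn x θ) ω ν ↔ ν = Function.update ω x (θ.realize ω))
    (ℓ : 𝒳) (k : L.Constants) (g : GLG L 𝒳 Act V) (Ωg : V → Set (𝒳 → M)) (D : Set (𝒳 → M)) :
    (GLG.seq (.act (asn ℓ (Language.Constants.term k)))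
      (.seq (GLG.cross (.seq (.dual (.test (.lit (.eq (.var ℓ) (Language.Constants.term k)))))
                             g))
            (.dual (.test (.lit (.ne (.var ℓ) (Language.Constants.term k))))))).sem tr Ωg D
    = {ω | Function.update ω ℓ (Language.constantMap k) ∈
        (⋂₀ {Z | ({ω : 𝒳 → M | ω ℓ = Language.constantMap k}ᶜ ∩ Dᶜ)
          ∪ ({ω : 𝒳 → M | ω ℓ = Language.constantMap k} ∩ (g.sem tr Ωg Zᶜ)ᶜ) ⊆ Z})ᶜ} := by
  have hbody : ∀ Z : Set (𝒳 → M),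
      (GLG.dual (GLG.seq (GLG.dual (GLG.test (GLF.lit
          (.eq (.var ℓ) (Language.Constants.term k))))) g)).sem tr Ωg Z
        = {ω : 𝒳 → M | ω ℓ = Language.constantMap k} ∩ (g.sem tr Ωg Zᶜ)ᶜ := by
    intro Z
    rw [glg_sem_dual, glg_sem_seq, glg_sem_dual, test_eq_sem, compl_compl]
  conv_lhs => rw [GLG.cross, glg_sem_seq, glg_sem_seq,
    glg_sem_dual tr (GLG.test (GLF.lit (.ne (.var ℓ) (Language.Constants.term k)))),
    test_ne_sem, glg_sem_dual tr
      (GLG.star (GLG.dual (GLG.seq (GLG.dual (GLG.test (GLF.lit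
        (.eq (.var ℓ) (Language.Constants.term k))))) g))),
    glg_sem_star, compl_compl, act_asn_sem tr asn hasn]
  simp only [hbody]

theorem trGame_sem_eq
    (asn : 𝒳 → L.Term 𝒳 → Act)
    (hasn : ∀ (x : 𝒳) (θ : L.Term 𝒳) (ω ν : 𝒳 → M),
      tr (asn x θ) ω ν ↔ ν = Function.update ω x (θ.realize ω))
    (c : V ⊕ V → L.Constants)
    (hc : ∀ (X Y : V ⊕ V), X ≠ Y → ∀ ω : 𝒳 → M,
      (Language.Constants.term (c X) : L.Term 𝒳).realize ω
        ≠ (Language.Constants.term (c Y) : L.Term 𝒳).realize ω)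
    (ℓ : 𝒳) (Ωg : V → Set (𝒳 → M)) :
    ∀ (φ : MuF L 𝒳 Act V) (ϑ : V → Bool) (Ω : V → Set (𝒳 → M)) (D : Set (𝒳 → M)),
      φ.WF → (φ.boundList.map unbar).Nodup → Compat ϑ φ →
      ℓ ∉ φ.ovars → (∀ a ∈ φ.acts, IndepAct tr ℓ a) →
      (∀ Y ∈ φ.freeVars, ϑ (unbar Y) = true ∧ StIndep ℓ (barVal Ω Y) ∧
        (∀ ω : 𝒳 → M, Function.update ω ℓ (Language.constantMap (c Y)) ∈ D
          ↔ ω ∈ barVal Ω Y)) →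
      (trGame ℓ c asn φ ϑ).sem tr Ωg D = φ.sem tr Ω := by
  have hcv : ∀ (X Y : V ⊕ V), X ≠ Y → ∀ (_ : 𝒳 → M),
      (Language.constantMap (c X) : M) ≠ Language.constantMap (c Y) := by
    intro X Y hXY ω
    have := hc X Y hXY ω
    rwa [Language.Term.realize_constants, Language.Term.realize_constants] at this
  intro φ
  induction φ with
  | lit p =>
      intro ϑ Ω D _ _ _ _ _ _
      rw [trGame, glg_sem_seq, glg_sem_dual, glg_sem_test, glg_sem_test, glFalse_sem]
      simp [GLF.sem, MuF.sem]
  | var X =>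
      intro ϑ Ω D _ _ _ _ _ H
      obtain ⟨hϑ, _, hD⟩ := H X rfl
      simp only [trGame, hϑ, if_true]
      rw [act_asn_sem tr asn hasn]
      ext ω
      simp only [Set.mem_setOf_eq, MuF.sem]
      exact hD ω
  | or φ ψ ihφ ihψ =>
      intro ϑ Ω D hwf hnd hcompat hov hacts H
      have hnd2 : ((φ.boundList.map unbar) ++ (ψ.boundList.map unbar)).Nodup := by
        simpa [MuF.boundList] using hnd
      rw [trGame, glg_sem_choice,
        ihφ ϑ Ω D hwf.1 hnd2.of_append_left
          (fun Z hZ => hcompat Z (Set.mem_union_left _ hZ))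
          (fun hh => hov (Set.mem_union_left _ hh))
          (fun a ha => hacts a (Set.mem_union_left _ ha))
          (fun Y hY => H Y (Set.mem_union_left _ hY)),
        ihψ ϑ Ω D hwf.2 hnd2.of_append_right
          (fun Z hZ => hcompat Z (Set.mem_union_right _ hZ))
          (fun hh => hov (Set.mem_union_right _ hh))
          (fun a ha => hacts a (Set.mem_union_right _ ha))
          (fun Y hY => H Y (Set.mem_union_right _ hY))]
      rfl
  | and φ ψ ihφ ihψ =>
      intro ϑ Ω D hwf hnd hcompat hov hacts H
      have hnd2 : ((φ.boundList.map unbar) ++ (ψ.boundList.map unbar)).Nodup := by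
        simpa [MuF.boundList] using hnd
      have hsem : ∀ (γ₁ γ₂ : GLG L 𝒳 Act V) (S : Set (𝒳 → M)),
          (GLG.dchoice γ₁ γ₂).sem tr Ωg S = γ₁.sem tr Ωg S ∩ γ₂.sem tr Ωg S := by
        intro γ₁ γ₂ S
        rw [GLG.dchoice, glg_sem_dual, glg_sem_choice, glg_sem_dual, glg_sem_dual,
          compl_compl, Set.compl_union, compl_compl, compl_compl]
      rw [trGame, hsem,
        ihφ ϑ Ω D hwf.1 hnd2.of_append_left
          (fun Z hZ => hcompat Z (Set.mem_union_left _ hZ))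
          (fun hh => hov (Set.mem_union_left _ hh))
          (fun a ha => hacts a (Set.mem_union_left _ ha))
          (fun Y hY => H Y (Set.mem_union_left _ hY)),
        ihψ ϑ Ω D hwf.2 hnd2.of_append_right
          (fun Z hZ => hcompat Z (Set.mem_union_right _ hZ))
          (fun hh => hov (Set.mem_union_right _ hh))
          (fun a ha => hacts a (Set.mem_union_right _ ha))
          (fun Y hY => H Y (Set.mem_union_right _ hY))]
      rfl
  | dia a φ ih =>
      intro ϑ Ω D hwf hnd hcompat hov hacts H
      rw [trGame, glg_sem_seq, glg_sem_act,
        ih ϑ Ω D hwf hnd hcompat hov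
          (fun a' ha' => hacts a' (Set.mem_union_right _ ha')) H]
      rfl
  | box a φ ih =>
      intro ϑ Ω D hwf hnd hcompat hov hacts H
      rw [trGame, glg_sem_seq, glg_sem_dual, glg_sem_act,
        ih ϑ Ω D hwf hnd hcompat hov
          (fun a' ha' => hacts a' (Set.mem_union_right _ ha')) H]
      ext ω
      simp only [MuF.sem, Set.mem_compl_iff, Set.mem_setOf_eq, not_exists, not_and,
        not_not]
  | mu X φ ih =>
      intro ϑ Ω D hwf hnd hcompat hov hacts H
      have hbarX : bar X ∉ φ.mentions := hwf.1
      have hwfφ : φ.WF := hwf.2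
      have hXnotin : unbar X ∉ φ.boundList.map unbar := by
        have h0 := hnd
        simp only [MuF.boundList, List.map_cons, List.nodup_cons] at h0
        exact h0.1
      have hndφ : (φ.boundList.map unbar).Nodup := by
        have h0 := hnd
        simp only [MuF.boundList, List.map_cons, List.nodup_cons] at h0
        exact h0.2
      have hcompatφ : Compat (dictUp ϑ X) φ := by
        intro Z hZ
        have hne : unbar Z ≠ unbar X := fun he =>
          hXnotin (he ▸ List.mem_map_of_mem (f := unbar) (mem_boundList_of_mem_boundVars φ hZ))
        show Function.update ϑ (unbar X) true (unbar Z) = false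
        rw [Function.update_of_ne hne]
        exact hcompat Z (Set.mem_union_right _ hZ)
      have hbarXfree : bar X ∉ φ.freeVars := fun h0 => hbarX (freeVars_subset_mentions φ h0)
      have hYsplit : ∀ Y ∈ φ.freeVars, Y = X ∨
          (unbar Y ≠ unbar X ∧ Y ∈ (MuF.mu X φ).freeVars) := by
        intro Y hY
        by_cases hYX : Y = X
        · exact Or.inl hYX
        · have hYb : Y ≠ bar X := fun h0 => hbarXfree (h0 ▸ hY)
          have hun : unbar Y ≠ unbar X := by
            intro he
            rcases eq_or_eq_bar_of_unbar_eq he with h1 | h1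
            · exact hYX h1
            · exact hYb h1
          exact Or.inr ⟨hun, hY, by simp [hYX, hYb]⟩
      have mono : ∀ ⦃E E' : Set (𝒳 → M)⦄, E ⊆ E' →
          φ.sem tr (modif Ω X E) ⊆ φ.sem tr (modif Ω X E') :=
        fun E E' h0 => muf_sem_mono tr φ X hbarX Ω h0
      have hEstar_pre : φ.sem tr (modif Ω X ((MuF.mu X φ).sem tr Ω)) ⊆ (MuF.mu X φ).sem tr Ω := by
        show φ.sem tr (modif Ω X (⋂₀ {E | φ.sem tr (modif Ω X E) ⊆ E})) ⊆ _
        exact lfpSet_prefix (fun E => φ.sem tr (modif Ω X E)) mono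
      have hEstar_least : ∀ {E : Set (𝒳 → M)}, φ.sem tr (modif Ω X E) ⊆ E →
          (MuF.mu X φ).sem tr Ω ⊆ E :=
        fun h0 => lfpSet_le (fun E => φ.sem tr (modif Ω X E)) h0
      have hEstar_ind : StIndep ℓ ((MuF.mu X φ).sem tr Ω) :=
        muf_sem_indep tr ℓ (MuF.mu X φ) hwf hov hacts Ω (fun Y hY => (H Y hY).2.1)
      rw [trGame, mu_game_sem tr asn hasn]
      set cX : M := Language.constantMap (c X) with hcX
      set g : GLG L 𝒳 Act V := trGame ℓ c asn φ (dictUp ϑ X) with hgdef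
      set A : Set (𝒳 → M) := {ω : 𝒳 → M | ω ℓ = cX} with hA
      set W : Set (𝒳 → M) := ⋂₀ {Z | (Aᶜ ∩ D) ∪ (A ∩ g.sem tr Ωg Z) ⊆ Z} with hW
      have hWfix : (Aᶜ ∩ D) ∪ (A ∩ g.sem tr Ωg W) = W := by
        rw [hW]
        exact lfpSet_fixed (fun Z => (Aᶜ ∩ D) ∪ (A ∩ g.sem tr Ωg Z))
          (fun Z Z' h0 => Set.union_subset_union subset_rfl
            (Set.inter_subset_inter subset_rfl (glg_sem_mono tr g Ωg h0)))
      have hupA : ∀ (ω : 𝒳 → M) (b : M), Function.update ω ℓ b ∈ A ↔ b = cX := by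
        intro ω b
        simp [hA]
      have hIH : ∀ (E T : Set (𝒳 → M)), StIndep ℓ E →
          (∀ ω : 𝒳 → M, Function.update ω ℓ cX ∈ T ↔ ω ∈ E) →
          (∀ Y, unbar Y ≠ unbar X → Y ∈ (MuF.mu X φ).freeVars →
            ∀ ω : 𝒳 → M, Function.update ω ℓ (Language.constantMap (c Y)) ∈ T
              ↔ ω ∈ barVal Ω Y) →
          g.sem tr Ωg T = φ.sem tr (modif Ω X E) := by
        intro E T hEind hTX hTother
        rw [hgdef]
        apply ih (dictUp ϑ X) (modif Ω X E) T hwfφ hndφ hcompatφ hov (fun a ha => hacts a ha)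
        intro Y hY
        rcases hYsplit Y hY with rfl | ⟨hun, hmem⟩
        · refine ⟨by simp [dictUp], ?_, ?_⟩
          · rw [barVal_modif_self]
            exact hEind
          · intro ω
            rw [barVal_modif_self]
            exact hTX ω
        · refine ⟨?_, ?_, ?_⟩
          · show Function.update ϑ (unbar X) true (unbar Y) = true
            rw [Function.update_of_ne hun]
            exact (H Y hmem).1
          · rw [barVal_modif_other _ hun]
            exact (H Y hmem).2.1
          · intro ω
            rw [barVal_modif_other _ hun]
            exact hTother Y hun hmem ω
      have hcne : ∀ (Y : V ⊕ V), unbar Y ≠ unbar X → (ω : 𝒳 → M) →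
          Language.constantMap (c Y) ≠ cX := by
        intro Y hun ω he
        exact hcv Y X (fun h0 => hun (by rw [h0])) ω (he.trans hcX)
      have hdir1 : W ⊆ (Aᶜ ∩ D) ∪ (A ∩ (MuF.mu X φ).sem tr Ω) := by
        rw [hW]
        apply lfpSet_le
        have hGZ : g.sem tr Ωg ((Aᶜ ∩ D) ∪ (A ∩ (MuF.mu X φ).sem tr Ω))
            = φ.sem tr (modif Ω X ((MuF.mu X φ).sem tr Ω)) := by
          apply hIH _ _ hEstar_ind
          · intro ω
            constructor
            · rintro (⟨h1, _⟩ | ⟨_, h2⟩)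
              · exact absurd ((hupA ω _).mpr rfl) h1
              · exact (hEstar_ind cX ω).mpr h2
            · intro h0
              exact Or.inr ⟨(hupA ω _).mpr rfl, (hEstar_ind cX ω).mp h0⟩
          · intro Y hun hmem ω
            constructor
            · rintro (⟨_, h2⟩ | ⟨h1, _⟩)
              · exact ((H Y hmem).2.2 ω).mp h2
              · exact absurd ((hupA ω _).mp h1) (hcne Y hun ω)
            · intro h0
              exact Or.inl ⟨fun h1 => hcne Y hun ω ((hupA ω _).mp h1),
                ((H Y hmem).2.2 ω).mpr h0⟩
        rw [hGZ]
        refine Set.union_subset Set.subset_union_left ?_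
        rintro ω ⟨h1, h2⟩
        exact Or.inr ⟨h1, hEstar_pre h2⟩
      have hsub1 : {ω : 𝒳 → M | Function.update ω ℓ cX ∈ W} ⊆ (MuF.mu X φ).sem tr Ω := by
        intro ω hω
        rcases hdir1 hω with ⟨h1, _⟩ | ⟨_, h2⟩
        · exact absurd ((hupA ω _).mpr rfl) h1
        · exact (hEstar_ind cX ω).mpr h2
      have hE'ind : StIndep ℓ {ω : 𝒳 → M | Function.update ω ℓ cX ∈ W} := by
        intro b ω
        simp only [Set.mem_setOf_eq, Function.update_idem]
      have hGW : g.sem tr Ωg W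
          = φ.sem tr (modif Ω X {ω : 𝒳 → M | Function.update ω ℓ cX ∈ W}) := by
        apply hIH _ _ hE'ind
        · intro ω
          exact Iff.rfl
        · intro Y hun hmem ω
          constructor
          · intro h0
            rw [← hWfix] at h0
            rcases h0 with ⟨_, h2⟩ | ⟨h1, _⟩
            · exact ((H Y hmem).2.2 ω).mp h2
            · exact absurd ((hupA ω _).mp h1) (hcne Y hun ω)
          · intro h0
            rw [← hWfix]
            exact Or.inl ⟨fun h1 => hcne Y hun ω ((hupA ω _).mp h1),
              ((H Y hmem).2.2 ω).mpr h0⟩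
      have hindF : StIndep ℓ (φ.sem tr
          (modif Ω X {ω : 𝒳 → M | Function.update ω ℓ cX ∈ W})) := by
        apply muf_sem_indep tr ℓ φ hwfφ hov hacts
        intro Y hY
        rcases hYsplit Y hY with rfl | ⟨hun, hmem⟩
        · rw [barVal_modif_self]
          exact hE'ind
        · rw [barVal_modif_other _ hun]
          exact (H Y hmem).2.1
      have hsub2 : (MuF.mu X φ).sem tr Ω ⊆ {ω : 𝒳 → M | Function.update ω ℓ cX ∈ W} := by
        apply hEstar_least
        intro ω hω
        have h1 : Function.update ω ℓ cX ∈ φ.sem tr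
            (modif Ω X {ω : 𝒳 → M | Function.update ω ℓ cX ∈ W}) :=
          (hindF cX ω).mp hω
        rw [← hGW] at h1
        show Function.update ω ℓ cX ∈ W
        rw [← hWfix]
        exact Or.inr ⟨(hupA ω cX).mpr rfl, h1⟩
      exact Set.Subset.antisymm hsub1 hsub2
  | nu X φ ih =>
      intro ϑ Ω D hwf hnd hcompat hov hacts H
      have hbarX : bar X ∉ φ.mentions := hwf.1
      have hwfφ : φ.WF := hwf.2
      have hXnotin : unbar X ∉ φ.boundList.map unbar := by
        have h0 := hnd
        simp only [MuF.boundList, List.map_cons, List.nodup_cons] at h0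
        exact h0.1
      have hndφ : (φ.boundList.map unbar).Nodup := by
        have h0 := hnd
        simp only [MuF.boundList, List.map_cons, List.nodup_cons] at h0
        exact h0.2
      have hcompatφ : Compat (dictUp ϑ X) φ := by
        intro Z hZ
        have hne : unbar Z ≠ unbar X := fun he =>
          hXnotin (he ▸ List.mem_map_of_mem (f := unbar) (mem_boundList_of_mem_boundVars φ hZ))
        show Function.update ϑ (unbar X) true (unbar Z) = false
        rw [Function.update_of_ne hne]
        exact hcompat Z (Set.mem_union_right _ hZ)
      have hbarXfree : bar X ∉ φ.freeVars := fun h0 => hbarX (freeVars_subset_mentions φ h0)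
      have hYsplit : ∀ Y ∈ φ.freeVars, Y = X ∨
          (unbar Y ≠ unbar X ∧ Y ∈ (MuF.nu X φ).freeVars) := by
        intro Y hY
        by_cases hYX : Y = X
        · exact Or.inl hYX
        · have hYb : Y ≠ bar X := fun h0 => hbarXfree (h0 ▸ hY)
          have hun : unbar Y ≠ unbar X := by
            intro he
            rcases eq_or_eq_bar_of_unbar_eq he with h1 | h1
            · exact hYX h1
            · exact hYb h1
          exact Or.inr ⟨hun, hY, by simp [hYX, hYb]⟩
      have mono : ∀ ⦃E E' : Set (𝒳 → M)⦄, E ⊆ E' →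
          φ.sem tr (modif Ω X E) ⊆ φ.sem tr (modif Ω X E') :=
        fun E E' h0 => muf_sem_mono tr φ X hbarX Ω h0
      have hNpost : (MuF.nu X φ).sem tr Ω ⊆ φ.sem tr (modif Ω X ((MuF.nu X φ).sem tr Ω)) := by
        show (⋃₀ {E | E ⊆ φ.sem tr (modif Ω X E)}) ⊆ _
        exact gfpSet_postfix (fun E => φ.sem tr (modif Ω X E)) mono
      have hNgreatest : ∀ {E : Set (𝒳 → M)}, E ⊆ φ.sem tr (modif Ω X E) →
          E ⊆ (MuF.nu X φ).sem tr Ω :=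
        fun h0 => gfpSet_le (fun E => φ.sem tr (modif Ω X E)) h0
      have hNind : StIndep ℓ ((MuF.nu X φ).sem tr Ω) :=
        muf_sem_indep tr ℓ (MuF.nu X φ) hwf hov hacts Ω (fun Y hY => (H Y hY).2.1)
      rw [trGame, nu_game_sem tr asn hasn]
      set cX : M := Language.constantMap (c X) with hcX
      set g : GLG L 𝒳 Act V := trGame ℓ c asn φ (dictUp ϑ X) with hgdef
      set A : Set (𝒳 → M) := {ω : 𝒳 → M | ω ℓ = cX} with hA
      set W : Set (𝒳 → M) := ⋂₀ {Z | (Aᶜ ∩ Dᶜ) ∪ (A ∩ (g.sem tr Ωg Zᶜ)ᶜ) ⊆ Z} with hW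
      have hWfix : (Aᶜ ∩ Dᶜ) ∪ (A ∩ (g.sem tr Ωg Wᶜ)ᶜ) = W := by
        rw [hW]
        exact lfpSet_fixed (fun Z => (Aᶜ ∩ Dᶜ) ∪ (A ∩ (g.sem tr Ωg Zᶜ)ᶜ))
          (fun Z Z' h0 => Set.union_subset_union subset_rfl
            (Set.inter_subset_inter subset_rfl (Set.compl_subset_compl.mpr
              (glg_sem_mono tr g Ωg (Set.compl_subset_compl.mpr h0)))))
      have hupA : ∀ (ω : 𝒳 → M) (b : M), Function.update ω ℓ b ∈ A ↔ b = cX := by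
        intro ω b
        simp [hA]
      have hIH : ∀ (E T : Set (𝒳 → M)), StIndep ℓ E →
          (∀ ω : 𝒳 → M, Function.update ω ℓ cX ∈ T ↔ ω ∈ E) →
          (∀ Y, unbar Y ≠ unbar X → Y ∈ (MuF.nu X φ).freeVars →
            ∀ ω : 𝒳 → M, Function.update ω ℓ (Language.constantMap (c Y)) ∈ T
              ↔ ω ∈ barVal Ω Y) →
          g.sem tr Ωg T = φ.sem tr (modif Ω X E) := by
        intro E T hEind hTX hTother
        rw [hgdef]
        apply ih (dictUp ϑ X) (modif Ω X E) T hwfφ hndφ hcompatφ hov (fun a ha => hacts a ha)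
        intro Y hY
        rcases hYsplit Y hY with rfl | ⟨hun, hmem⟩
        · refine ⟨by simp [dictUp], ?_, ?_⟩
          · rw [barVal_modif_self]
            exact hEind
          · intro ω
            rw [barVal_modif_self]
            exact hTX ω
        · refine ⟨?_, ?_, ?_⟩
          · show Function.update ϑ (unbar X) true (unbar Y) = true
            rw [Function.update_of_ne hun]
            exact (H Y hmem).1
          · rw [barVal_modif_other _ hun]
            exact (H Y hmem).2.1
          · intro ω
            rw [barVal_modif_other _ hun]
            exact hTother Y hun hmem ω
      have hcne : ∀ (Y : V ⊕ V), unbar Y ≠ unbar X → (ω : 𝒳 → M) →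
          Language.constantMap (c Y) ≠ cX := by
        intro Y hun ω he
        exact hcv Y X (fun h0 => hun (by rw [h0])) ω (he.trans hcX)
      -- Direction 1 : N ⊆ LHS
      have hGY : g.sem tr Ωg ((Aᶜ ∩ D) ∪ (A ∩ (MuF.nu X φ).sem tr Ω))
          = φ.sem tr (modif Ω X ((MuF.nu X φ).sem tr Ω)) := by
        apply hIH _ _ hNind
        · intro ω
          constructor
          · rintro (⟨h1, _⟩ | ⟨_, h2⟩)
            · exact absurd ((hupA ω _).mpr rfl) h1
            · exact (hNind cX ω).mpr h2
          · intro h0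
            exact Or.inr ⟨(hupA ω _).mpr rfl, (hNind cX ω).mp h0⟩
        · intro Y hun hmem ω
          constructor
          · rintro (⟨_, h2⟩ | ⟨h1, _⟩)
            · exact ((H Y hmem).2.2 ω).mp h2
            · exact absurd ((hupA ω _).mp h1) (hcne Y hun ω)
          · intro h0
            exact Or.inl ⟨fun h1 => hcne Y hun ω ((hupA ω _).mp h1),
              ((H Y hmem).2.2 ω).mpr h0⟩
      have hWY : W ⊆ ((Aᶜ ∩ D) ∪ (A ∩ (MuF.nu X φ).sem tr Ω))ᶜ := by
        rw [hW]
        apply lfpSet_le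
        rintro ω (⟨h1, h2⟩ | ⟨h1, h2⟩)
        · rintro (⟨_, hD⟩ | ⟨hA1, _⟩)
          · exact h2 hD
          · exact h1 hA1
        · rw [compl_compl, hGY] at h2
          rintro (⟨hc, _⟩ | ⟨_, hN⟩)
          · exact hc h1
          · exact h2 (hNpost hN)
      have hsub1 : (MuF.nu X φ).sem tr Ω ⊆ {ω : 𝒳 → M | Function.update ω ℓ cX ∈ Wᶜ} := by
        intro ω hω
        show Function.update ω ℓ cX ∈ Wᶜ
        intro hmemW
        exact hWY hmemW (Or.inr ⟨(hupA ω cX).mpr rfl, (hNind cX ω).mp hω⟩)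
      -- Direction 2 : LHS ⊆ N
      have hE'ind : StIndep ℓ {ω : 𝒳 → M | Function.update ω ℓ cX ∈ Wᶜ} := by
        intro b ω
        simp only [Set.mem_setOf_eq, Set.mem_compl_iff, Function.update_idem]
      have hGWc : g.sem tr Ωg Wᶜ
          = φ.sem tr (modif Ω X {ω : 𝒳 → M | Function.update ω ℓ cX ∈ Wᶜ}) := by
        apply hIH _ _ hE'ind
        · intro ω
          exact Iff.rfl
        · intro Y hun hmem ω
          have hmemW : Function.update ω ℓ (Language.constantMap (c Y)) ∈ W ↔
              Function.update ω ℓ (Language.constantMap (c Y)) ∉ D := by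
            rw [← hWfix]
            constructor
            · rintro (⟨_, h2⟩ | ⟨h1, _⟩)
              · exact h2
              · exact absurd ((hupA ω _).mp h1) (hcne Y hun ω)
            · intro h0
              exact Or.inl ⟨fun h1 => hcne Y hun ω ((hupA ω _).mp h1), h0⟩
          constructor
          · intro h0
            have h1 : ¬ (Function.update ω ℓ (Language.constantMap (c Y)) ∉ D) :=
              fun h2 => h0 (hmemW.mpr h2)
            exact ((H Y hmem).2.2 ω).mp (not_not.mp h1)
          · intro h0 hcon
            exact (hmemW.mp hcon) (((H Y hmem).2.2 ω).mpr h0)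
      have hindF : StIndep ℓ (φ.sem tr
          (modif Ω X {ω : 𝒳 → M | Function.update ω ℓ cX ∈ Wᶜ})) := by
        apply muf_sem_indep tr ℓ φ hwfφ hov hacts
        intro Y hY
        rcases hYsplit Y hY with rfl | ⟨hun, hmem⟩
        · rw [barVal_modif_self]
          exact hE'ind
        · rw [barVal_modif_other _ hun]
          exact (H Y hmem).2.1
      have hsub2 : {ω : 𝒳 → M | Function.update ω ℓ cX ∈ Wᶜ} ⊆ (MuF.nu X φ).sem tr Ω := by
        apply hNgreatest
        intro ω hω
        have h1 : Function.update ω ℓ cX ∈ g.sem tr Ωg Wᶜ := by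
          by_contra hcon
          refine absurd ?_ hω
          show Function.update ω ℓ cX ∈ W
          rw [← hWfix]
          exact Or.inr ⟨(hupA ω cX).mpr rfl, hcon⟩
        rw [hGWc] at h1
        exact (hindF cX ω).mpr h1
      exact Set.Subset.antisymm hsub2 hsub1

end MainTr

/-- Equi-expressivity: over any assignment structure,
(1) `𝔄⟦φ⟧_GL = 𝔄⟦φ♯⟧_μ` for every `GL`-formula `φ` (without propositional variables), and
(2) `𝔄⟦ψ⟧_μ = 𝔄⟦ψ♭⟧_GL` for every `Lμ`-formula `ψ` (without free propositional variables),
where `ψ♭ = ⟨ψ^η⟩⊤` and `η` is the dictionary with value `0` everywhere. -/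
theorem equi_expressivity (L : Language) (𝒳 Act V : Type*)
    [DecidableEq 𝒳] [DecidableEq V]
    (M : Type*) [L.Structure M]
    (tr : Act → (𝒳 → M) → (𝒳 → M) → Prop)
    -- `L` has deterministic assignments and `M` is an assignment structure:
    (asn : 𝒳 → L.Term 𝒳 → Act)
    (hasn : ∀ (x : 𝒳) (θ : L.Term 𝒳) (ω ν : 𝒳 → M),
      tr (asn x θ) ω ν ↔ ν = Function.update ω x (θ.realize ω))
    (c0 c1 : L.Constants)
    (h01 : ∀ ω : 𝒳 → M, (Language.Constants.term c0 : L.Term 𝒳).realize ω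
        ≠ (Language.Constants.term c1 : L.Term 𝒳).realize ω)
    -- distinct constant symbols `c_X` with pairwise distinct interpretations:
    (c : V ⊕ V → L.Constants)
    (hc : ∀ (X Y : V ⊕ V), X ≠ Y → ∀ ω : 𝒳 → M,
      (Language.Constants.term (c X) : L.Term 𝒳).realize ω
        ≠ (Language.Constants.term (c Y) : L.Term 𝒳).realize ω)
    -- the control variable `ℓ`:
    (ℓ : 𝒳)
 :
    (∀ (φ : GLF L 𝒳 Act V) (m : MuF L 𝒳 Act V), φ.pvars = ∅ → Sharp φ m →
      ∀ Ω : V → Set (𝒳 → M), φ.sem tr Ω = m.sem tr Ω)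
    ∧ (∀ ψ : MuF L 𝒳 Act V, ψ.WF → ψ.freeVars = ∅ → ψ.BoundOnce →
        ℓ ∉ ψ.ovars → (∀ a ∈ ψ.acts, IndepAct tr ℓ a) →
        ∀ Ω : V → Set (𝒳 → M), ψ.sem tr Ω = (flatF ℓ c asn ψ).sem tr Ω) := by
  constructor
  · intro φ m _ hsh Ω
    exact sharp_sem tr hsh Ω
  · intro ψ hwf hfv hbound hov hacts Ω
    have hdia : (GLF.dia (trGame ℓ c asn ψ (fun _ => false)) (glTrue ℓ)).sem tr Ω
        = (trGame ℓ c asn ψ (fun _ => false)).sem tr Ω ((glTrue ℓ : GLF L 𝒳 Act V).sem tr Ω) := by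
      rw [GLF.sem]
    rw [flatF, hdia, glTrue_sem]
    exact (trGame_sem_eq tr asn hasn c hc ℓ Ω ψ (fun _ => false) Ω Set.univ hwf hbound
      (fun X _ => rfl) hov hacts
      (fun Y hY => absurd (hfv ▸ hY) (Set.notMem_empty Y))).symm

end GLMu
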